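/- arXiv:1806.09086 — 5 statements merged into one kernel-verified Lean document; each statement's English description precedes it below -/
import Mathlib

section
/- Let n ≥ 1 and let f : ℝⁿ → ℝⁿ be defined on the open unit ball by f(x) = (1 - ‖x‖²)^{-1/2} x. Then for every x ∈ ℝⁿ with ‖x‖ < 1, the map f is differentiable at x and the absolute value of the determinant of its derivative at x equals (1 - ‖x‖²)^{-(n/2 + 1)}. -/
open MeasureTheory

lemma aux_det (n : ℕ) (x : EuclideanSpace ℝ (Fin n)) (a b : ℝ) (ha : a ≠ 0)
    (D : EuclideanSpace ℝ (Fin n) →L[ℝ] EuclideanSpace ℝ (Fin n))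
    (hD : D = a • ContinuousLinearMap.id ℝ _ + (b • innerSL ℝ x).smulRight x) :
    D.det = a ^ n * (1 + a⁻¹ * b * ‖x‖^2) := by
  set B := (EuclideanSpace.basisFun (Fin n) ℝ).toBasis with hB
  have hBM : LinearMap.toMatrix B B (D : _ →ₗ[ℝ] _)
      = a • ((1 : Matrix (Fin n) (Fin n) ℝ)
          + Matrix.replicateCol Unit (fun i => a⁻¹ * b * x i) * Matrix.replicateRow Unit (fun i => x i)) := by
    ext i j
    simp [LinearMap.toMatrix_apply, hD, hB, Matrix.one_apply, PiLp.inner_apply,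
      EuclideanSpace.basisFun_apply, Matrix.mul_apply, mul_add,
      OrthonormalBasis.coe_toBasis_repr_apply, EuclideanSpace.basisFun_repr]
    field_simp
  have hxx : ∑ i, x i * x i = ‖x‖^2 := by
    rw [← real_inner_self_eq_norm_sq]
    simp only [PiLp.inner_apply, RCLike.inner_apply, conj_trivial]
  rw [ContinuousLinearMap.det, ← LinearMap.det_toMatrix B, hBM, Matrix.det_smul,
    Matrix.det_one_add_replicateCol_mul_replicateRow]
  simp only [dotProduct, Fintype.card_fin]
  rw [show ∑ i, x i * (a⁻¹ * b * x i) = a⁻¹ * b * ∑ i, x i * x i by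
    rw [Finset.mul_sum]; exact Finset.sum_congr rfl fun i _ => by ring]
  rw [hxx]

/-- For `n ≥ 1` and `f x = (1 - ‖x‖²)^(-1/2) • x` on the open unit ball of `ℝⁿ`,
`f` is differentiable at every `x` with `‖x‖ < 1`, and the absolute value of the
determinant of its derivative there equals `(1 - ‖x‖²)^(-(n/2 + 1))`. -/
theorem stmt0 (n : ℕ) (hn : 1 ≤ n)
    (f : EuclideanSpace ℝ (Fin n) → EuclideanSpace ℝ (Fin n))
    (hf : ∀ x, f x = ((1 - ‖x‖ ^ 2) ^ (-(1 / 2 : ℝ))) • x) :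
    ∀ x : EuclideanSpace ℝ (Fin n), ‖x‖ < 1 →
      DifferentiableAt ℝ f x ∧
        |(fderiv ℝ f x).det| = (1 - ‖x‖ ^ 2) ^ (-((n : ℝ) / 2 + 1)) := by
  intro x hx
  set s := ‖x‖ ^ 2 with hs
  have hs0 : 0 ≤ s := by positivity
  have hs1 : s < 1 := by
    have := pow_lt_one₀ (norm_nonneg x) hx (by norm_num : (2:ℕ) ≠ 0)
    simpa [hs] using this
  have ht : (0:ℝ) < 1 - s := by linarith
  set a : ℝ := (1 - s) ^ (-(1/2:ℝ)) with ha
  set b : ℝ := (1 - s) ^ (-(3/2:ℝ)) with hb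
  have hapos : 0 < a := Real.rpow_pos_of_pos ht _
  have hnorm : HasFDerivAt (fun y : EuclideanSpace ℝ (Fin n) => ‖y‖^2) (2 • innerSL ℝ x) x :=
    (hasStrictFDerivAt_norm_sq x).hasFDerivAt
  have hg := (hasFDerivAt_const (1:ℝ) x).sub hnorm
  have hrpow : HasDerivAt (fun t : ℝ => t ^ (-(1/2:ℝ))) ((-(1/2:ℝ)) * (1-s) ^ (-(1/2:ℝ)-1)) (1-s) :=
    Real.hasDerivAt_rpow_const (Or.inl ht.ne')
  have hc := hrpow.comp_hasFDerivAt x hg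
  have hc' : HasFDerivAt (fun y : EuclideanSpace ℝ (Fin n) => (1 - ‖y‖^2) ^ (-(1/2:ℝ)))
      (b • innerSL ℝ x) x := by
    refine hc.congr_fderiv ?_
    ext y
    simp [hb]
    rw [show (-(3/2):ℝ) = -2⁻¹-1 by norm_num]
    ring
  set D : EuclideanSpace ℝ (Fin n) →L[ℝ] EuclideanSpace ℝ (Fin n) :=
    a • ContinuousLinearMap.id ℝ _ + (b • innerSL ℝ x).smulRight x with hD
  have hfD : HasFDerivAt f D x := by
    have h1 := hc'.smul (hasFDerivAt_id x)
    have heq : (fun y : EuclideanSpace ℝ (Fin n) => (1 - ‖y‖^2) ^ (-(1/2:ℝ)) • id y) = f := by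
      funext y; rw [hf y]; rfl
    rw [← heq]
    exact h1.congr_fderiv rfl
  refine ⟨hfD.differentiableAt, ?_⟩
  rw [hfD.fderiv]
  have hdet : D.det = a ^ n * (1 + a⁻¹ * b * s) := by
    rw [aux_det n x a b hapos.ne' D hD, ← hs]
  -- arithmetic simplification
  have hab : a⁻¹ * b = (1 - s)⁻¹ := by
    rw [ha, hb, ← Real.rpow_neg_one (1-s)]
    rw [show (((1-s) ^ (-(1/2:ℝ)))⁻¹ : ℝ) = (1-s) ^ ((1/2:ℝ)) by
      rw [← Real.rpow_neg ht.le, neg_neg]]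
    rw [← Real.rpow_add ht]
    norm_num
  have h1s : 1 + (1 - s)⁻¹ * s = (1 - s)⁻¹ := by
    field_simp
    ring
  have hpowa : a ^ n = (1 - s) ^ (-((n:ℝ)/2)) := by
    rw [ha, ← Real.rpow_natCast ((1-s) ^ (-(1/2:ℝ))) n, ← Real.rpow_mul ht.le]
    ring_nf
  have : D.det = (1 - s) ^ (-((n:ℝ)/2 + 1)) := by
    rw [hdet, hab, h1s, hpowa, ← Real.rpow_neg_one (1-s), ← Real.rpow_add ht]
    ring_nf
  rw [this, abs_of_pos (Real.rpow_pos_of_pos ht _)]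
end

section
/- Let k ≥ 1, let α₁, …, α_k > 0 be real numbers with A = α₁ + ⋯ + α_k, and let h : [0, ∞) → [0, ∞] be measurable. Then ∫_{(0,∞)^k} (∏_{i=1}^k u_i^{α_i - 1}) · h(u₁ + ⋯ + u_k) du = (∏_{i=1}^k Γ(α_i) / Γ(A)) · ∫₀^∞ z^{A - 1} h(z) dz, where the left integral is with respect to k-dimensional Lebesgue measure on (0,∞)^k. -/
open MeasureTheory
open scoped ENNReal

open intervalIntegral

lemma beta_real (a b z : ℝ) (ha : 0 < a) (hb : 0 < b) (hz : 0 < z) :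
    ∫ x in (0:ℝ)..z, x ^ (a-1) * (z - x) ^ (b-1) =
      z ^ (a+b-1) * (Real.Gamma a * Real.Gamma b / Real.Gamma (a+b)) := by
  have hΓab : Real.Gamma (a+b) ≠ 0 := (Real.Gamma_pos_of_pos (by linarith)).ne'
  have hbeta : Complex.betaIntegral a b =
      ((Real.Gamma a * Real.Gamma b / Real.Gamma (a+b) : ℝ) : ℂ) := by
    have h1 := Complex.Gamma_mul_Gamma_eq_betaIntegral (s := (a:ℂ)) (t := (b:ℂ))
      (by simpa using ha) (by simpa using hb)
    rw [← Complex.ofReal_add, Complex.Gamma_ofReal, Complex.Gamma_ofReal,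
      Complex.Gamma_ofReal] at h1
    have h2 : (Real.Gamma (a+b) : ℂ) ≠ 0 := by exact_mod_cast hΓab
    field_simp
    rw [Complex.ofReal_div, Complex.ofReal_mul, eq_div_iff h2, mul_comm]
    exact h1.symm
  have hsc := Complex.betaIntegral_scaled (a:ℂ) (b:ℂ) hz
  have hcong : ∫ x in (0:ℝ)..z, ((x ^ (a-1) * (z - x) ^ (b-1) : ℝ) : ℂ)
      = ∫ x in (0:ℝ)..z, (x:ℂ) ^ ((a:ℂ) - 1) * ((z:ℂ) - x) ^ ((b:ℂ) - 1) := by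
    refine intervalIntegral.integral_congr fun x hx => ?_
    rw [Set.uIcc_of_le hz.le] at hx
    push_cast
    rw [Complex.ofReal_cpow hx.1, Complex.ofReal_cpow (by linarith [hx.2] : (0:ℝ) ≤ z - x)]
    push_cast
    ring
  have : ((∫ x in (0:ℝ)..z, x ^ (a-1) * (z - x) ^ (b-1) : ℝ) : ℂ)
      = ((z ^ (a+b-1) * (Real.Gamma a * Real.Gamma b / Real.Gamma (a+b)) : ℝ) : ℂ) := by
    rw [← intervalIntegral.integral_ofReal, hcong, hsc, hbeta, Complex.ofReal_mul,
      Complex.ofReal_cpow hz.le]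
    push_cast
    ring
  exact_mod_cast this

lemma beta_integrable (a b z : ℝ) (ha : 0 < a) (hb : 0 < b) (hz : 0 < z) :
    IntervalIntegrable (fun x => x ^ (a-1) * (z - x) ^ (b-1)) volume 0 z := by
  have h1 : IntervalIntegrable (fun x => x ^ (a-1) * (z - x) ^ (b-1)) volume 0 (z/2) := by
    apply IntervalIntegrable.mul_continuousOn
    · exact intervalIntegral.intervalIntegrable_rpow' (by linarith)
    · apply ContinuousOn.rpow_const
      · exact (continuous_const.sub continuous_id).continuousOn
      · intro x hx
        rw [Set.uIcc_of_le (by linarith : (0:ℝ) ≤ z/2)] at hx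
        exact Or.inl (ne_of_gt (by linarith [hx.2]))
  have h2 : IntervalIntegrable (fun x => x ^ (a-1) * (z - x) ^ (b-1)) volume (z/2) z := by
    apply IntervalIntegrable.continuousOn_mul
    · have : IntervalIntegrable (fun x : ℝ => x ^ (b-1)) volume 0 (z/2) :=
        intervalIntegral.intervalIntegrable_rpow' (by linarith)
      have h3 := this.comp_sub_left z
      rw [show z - z/2 = z/2 by ring, sub_zero] at h3
      exact h3.symm
    · apply ContinuousOn.rpow_const
      · exact continuous_id.continuousOn
      · intro x hx
        rw [Set.uIcc_of_le (by linarith : z/2 ≤ z)] at hx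
        exact Or.inl (ne_of_gt (by linarith [hx.1]))
  exact h1.trans h2

lemma beta_lint (a b z : ℝ) (ha : 0 < a) (hb : 0 < b) (hz : 0 < z) :
    ∫⁻ x in Set.Ioo (0:ℝ) z, ENNReal.ofReal (x ^ (a-1) * (z - x) ^ (b-1)) =
      ENNReal.ofReal (z ^ (a+b-1) * (Real.Gamma a * Real.Gamma b / Real.Gamma (a+b))) := by
  have hint : IntegrableOn (fun x => x ^ (a-1) * (z - x) ^ (b-1)) (Set.Ioo 0 z) volume := by
    have := (beta_integrable a b z ha hb hz).1
    exact this.mono_set Set.Ioo_subset_Ioc_self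
  rw [← MeasureTheory.ofReal_integral_eq_lintegral_ofReal hint ?_]
  · congr 1
    rw [← MeasureTheory.integral_Ioc_eq_integral_Ioo,
      ← intervalIntegral.integral_of_le hz.le]
    exact beta_real a b z ha hb hz
  · filter_upwards [ae_restrict_mem measurableSet_Ioo] with x hx
    exact mul_nonneg (Real.rpow_nonneg hx.1.le _) (Real.rpow_nonneg (by linarith [hx.2]) _)

lemma translate_lint (b x : ℝ) (h : ℝ → ℝ≥0∞) :
    (∫⁻ y in Set.Ioi (0:ℝ), ENNReal.ofReal (y ^ (b-1)) * h (x + y)) =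
      ∫⁻ z in Set.Ioi x, ENNReal.ofReal ((z - x) ^ (b-1)) * h z := by
  have hmp : MeasurePreserving (fun y : ℝ => y + x) volume volume :=
    measurePreserving_add_right volume x
  have H := hmp.setLIntegral_comp_emb (MeasurableEquiv.addRight x).measurableEmbedding
    (fun z => ENNReal.ofReal ((z - x) ^ (b-1)) * h z) (Set.Ioi 0)
  rw [Set.image_add_const_Ioi, zero_add] at H
  rw [← H]
  congr 1
  ext y
  rw [add_sub_cancel_right, add_comm]

noncomputable def Gker (a b : ℝ) (h : ℝ → ℝ≥0∞) (x z : ℝ) : ℝ≥0∞ :=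
  Set.indicator (Set.Ioo 0 z) (fun x' => ENNReal.ofReal (x' ^ (a-1) * (z - x') ^ (b-1))) x * h z

lemma meas_rpow_prod (a b : ℝ) : Measurable
    (fun q : ℝ × ℝ => ENNReal.ofReal (q.1 ^ (a-1) * (q.2 - q.1) ^ (b-1))) := by
  measurability

lemma meas_rpow_slice (a b z : ℝ) : Measurable
    (fun x : ℝ => ENNReal.ofReal (x ^ (a-1) * (z - x) ^ (b-1))) := by
  have h1 : Measurable fun x : ℝ => x ^ (a-1) := by measurability
  have h2 : Measurable fun x : ℝ => (z - x) ^ (b-1) :=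
    (show Measurable fun y : ℝ => y ^ (b-1) by measurability).comp
      (measurable_const.sub measurable_id)
  exact (h1.mul h2).ennreal_ofReal

lemma Gker_meas (a b : ℝ) (h : ℝ → ℝ≥0∞) (hh : Measurable h) :
    Measurable (fun p : ℝ × ℝ => Gker a b h p.1 p.2) := by
  have : (fun p : ℝ × ℝ => Gker a b h p.1 p.2) =
      fun p => Set.indicator {q : ℝ × ℝ | 0 < q.1 ∧ q.1 < q.2}
        (fun q => ENNReal.ofReal (q.1 ^ (a-1) * (q.2 - q.1) ^ (b-1))) p * h p.2 := by
    ext p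
    simp only [Gker, Set.indicator_apply, Set.mem_Ioo, Set.mem_setOf_eq]
  rw [this]
  exact ((meas_rpow_prod a b).indicator
    ((measurableSet_lt measurable_const measurable_fst).inter
      (measurableSet_lt measurable_fst measurable_snd))).mul (hh.comp measurable_snd)

lemma conv_lemma (a b : ℝ) (ha : 0 < a) (hb : 0 < b) (h : ℝ → ℝ≥0∞) (hh : Measurable h) :
    ∫⁻ x in Set.Ioi (0:ℝ), ENNReal.ofReal (x ^ (a-1)) *
        ∫⁻ y in Set.Ioi (0:ℝ), ENNReal.ofReal (y ^ (b-1)) * h (x + y) =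
      ENNReal.ofReal (Real.Gamma a * Real.Gamma b / Real.Gamma (a+b)) *
        ∫⁻ z in Set.Ioi (0:ℝ), ENNReal.ofReal (z ^ (a+b-1)) * h z := by
  have hC0 : 0 ≤ Real.Gamma a * Real.Gamma b / Real.Gamma (a+b) :=
    le_of_lt (div_pos (mul_pos (Real.Gamma_pos_of_pos ha) (Real.Gamma_pos_of_pos hb))
      (Real.Gamma_pos_of_pos (by linarith)))
  have step1 : ∫⁻ x in Set.Ioi (0:ℝ), ENNReal.ofReal (x ^ (a-1)) *
        ∫⁻ y in Set.Ioi (0:ℝ), ENNReal.ofReal (y ^ (b-1)) * h (x + y)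
      = ∫⁻ x, ∫⁻ z, Gker a b h x z := by
    rw [← lintegral_indicator measurableSet_Ioi]
    congr 1
    ext x
    rw [Set.indicator_apply]
    split_ifs with hx
    · rw [translate_lint b x h,
        ← lintegral_const_mul' _ _ ENNReal.ofReal_ne_top,
        ← lintegral_indicator measurableSet_Ioi]
      congr 1
      ext z
      simp only [Gker, Set.indicator_apply, Set.mem_Ioi, Set.mem_Ioo]
      have hx0 : (0:ℝ) < x := hx
      by_cases hz : x < z
      · rw [if_pos hz, if_pos ⟨hx0, hz⟩,
          ENNReal.ofReal_mul (Real.rpow_nonneg hx0.le _), mul_assoc]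
      · rw [if_neg hz, if_neg (fun hm => hz hm.2), zero_mul]
    · have hx0 : ¬ (0:ℝ) < x := hx
      symm
      have hz0 : ∀ z, Gker a b h x z = 0 := by
        intro z
        rw [Gker, Set.indicator_of_notMem (fun hm => hx0 hm.1), zero_mul]
      simp only [hz0, lintegral_zero]
  rw [step1, lintegral_lintegral_swap (Gker_meas a b h hh).aemeasurable]
  have step2 : ∀ z, (∫⁻ x, Gker a b h x z) =
      Set.indicator (Set.Ioi 0)
        (fun z => ENNReal.ofReal (z ^ (a+b-1) *
          (Real.Gamma a * Real.Gamma b / Real.Gamma (a+b))) * h z) z := by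
    intro z
    have key : (∫⁻ x, Gker a b h x z) = (∫⁻ x in Set.Ioo (0:ℝ) z,
        ENNReal.ofReal (x ^ (a-1) * (z - x) ^ (b-1))) * h z := by
      rw [show (fun x => Gker a b h x z) = fun x => Set.indicator (Set.Ioo 0 z)
          (fun x' => ENNReal.ofReal (x' ^ (a-1) * (z - x') ^ (b-1))) x * h z from rfl,
        lintegral_mul_const _ ((meas_rpow_slice a b z).indicator measurableSet_Ioo),
        lintegral_indicator measurableSet_Ioo]
    rw [key, Set.indicator_apply]
    split_ifs with hz
    · rw [beta_lint a b z ha hb (Set.mem_Ioi.1 hz)]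
    · rw [Set.Ioo_eq_empty (by simpa using hz), Measure.restrict_empty,
        lintegral_zero_measure, zero_mul]
  simp_rw [step2]
  rw [lintegral_indicator measurableSet_Ioi]
  have hcong : ∀ z ∈ Set.Ioi (0:ℝ), ENNReal.ofReal (z ^ (a+b-1) *
        (Real.Gamma a * Real.Gamma b / Real.Gamma (a+b))) * h z
      = ENNReal.ofReal (Real.Gamma a * Real.Gamma b / Real.Gamma (a+b)) *
        (ENNReal.ofReal (z ^ (a+b-1)) * h z) := by
    intro z hz
    rw [ENNReal.ofReal_mul (Real.rpow_nonneg (le_of_lt (Set.mem_Ioi.1 hz)) _)]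
    ring
  rw [setLIntegral_congr_fun measurableSet_Ioi hcong,
    lintegral_const_mul' _ _ ENNReal.ofReal_ne_top]

lemma meas_rpow_c (c : ℝ) : Measurable fun x : ℝ => ENNReal.ofReal (x ^ c) := by
  measurability

lemma dirichlet_aux (k : ℕ) : ∀ (α : Fin (k+1) → ℝ), (∀ i, 0 < α i) →
    ∀ (h : ℝ → ℝ≥0∞), Measurable h →
    ∫⁻ u : Fin (k+1) → ℝ in Set.univ.pi (fun _ : Fin (k+1) => Set.Ioi (0:ℝ)),
        (∏ i, ENNReal.ofReal ((u i) ^ (α i - 1))) * h (∑ i, u i)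
      = ENNReal.ofReal ((∏ i, Real.Gamma (α i)) / Real.Gamma (∑ i, α i)) *
        ∫⁻ z in Set.Ioi (0:ℝ), ENNReal.ofReal (z ^ ((∑ i, α i) - 1)) * h z := by
  induction k with
  | zero =>
    intro α hα h hh
    set f0 : ℝ → ℝ≥0∞ := fun x => ENNReal.ofReal (x ^ (α 0 - 1)) * h x with hf0
    have hS : (Set.univ.pi fun _ : Fin 1 => Set.Ioi (0:ℝ)) =
        (MeasurableEquiv.funUnique (Fin 1) ℝ) ⁻¹' Set.Ioi 0 := by
      ext u
      simp [MeasurableEquiv.funUnique, Set.mem_pi, Fin.forall_fin_one]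
    have hFf : (fun u : Fin 1 → ℝ =>
        (∏ i, ENNReal.ofReal ((u i) ^ (α i - 1))) * h (∑ i, u i)) =
        fun u => f0 ((MeasurableEquiv.funUnique (Fin 1) ℝ) u) := by
      funext u
      rw [Fin.prod_univ_one, Fin.sum_univ_one, hf0]
      rfl
    have key := (volume_preserving_funUnique (Fin 1) ℝ).setLIntegral_comp_preimage_emb
      (MeasurableEquiv.funUnique (Fin 1) ℝ).measurableEmbedding f0 (Set.Ioi 0)
    rw [hS, hFf]
    refine Eq.trans key ?_
    rw [hf0]
    rw [Fin.prod_univ_one, Fin.sum_univ_one, div_self (Real.Gamma_pos_of_pos (hα 0)).ne',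
      ENNReal.ofReal_one, one_mul]
  | succ k ih =>
    intro α hα h hh
    set A' : ℝ := ∑ j : Fin (k+1), α j.succ with hA'
    have hA'pos : 0 < A' := Finset.sum_pos (fun j _ => hα j.succ) Finset.univ_nonempty
    have hΓA' : Real.Gamma A' ≠ 0 := (Real.Gamma_pos_of_pos hA'pos).ne'
    set S' : Set (Fin (k+1) → ℝ) := Set.univ.pi (fun _ => Set.Ioi (0:ℝ)) with hS'
    set f : ℝ × (Fin (k+1) → ℝ) → ℝ≥0∞ := fun p =>
      ENNReal.ofReal (p.1 ^ (α 0 - 1)) *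
        ((∏ j, ENNReal.ofReal ((p.2 j) ^ (α j.succ - 1))) * h (p.1 + ∑ j, p.2 j)) with hf
    have hfmeas : Measurable f := by
      apply Measurable.mul
      · exact (meas_rpow_c (α 0 - 1)).comp measurable_fst
      · apply Measurable.mul
        · exact Finset.measurable_prod _ fun j _ =>
            (meas_rpow_c (α j.succ - 1)).comp ((measurable_pi_apply j).comp measurable_snd)
        · exact hh.comp (measurable_fst.add
            (Finset.measurable_sum _ fun j _ => (measurable_pi_apply j).comp measurable_snd))
    have heapp : ∀ u : Fin (k+2) → ℝ,
        (MeasurableEquiv.piFinSuccAbove (fun _ : Fin (k+2) => ℝ) 0) u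
          = (u 0, fun j => u j.succ) := by
      intro u
      simp only [MeasurableEquiv.piFinSuccAbove, Fin.insertNthEquiv, Fin.removeNth,
        Fin.succAbove_zero, MeasurableEquiv.coe_mk, Equiv.coe_fn_mk, Equiv.coe_fn_symm_mk,
        Equiv.symm_symm]
      exact Prod.ext rfl (funext fun j => rfl)
    have hS : (Set.univ.pi fun _ : Fin (k+2) => Set.Ioi (0:ℝ)) =
        (MeasurableEquiv.piFinSuccAbove (fun _ : Fin (k+2) => ℝ) 0) ⁻¹'
          (Set.Ioi (0:ℝ) ×ˢ S') := by
      ext u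
      rw [Set.mem_preimage, heapp u, Set.mem_prod]
      simp only [Set.mem_pi, Set.mem_univ, true_implies, hS']
      constructor
      · intro hu
        exact ⟨hu 0, fun j => hu j.succ⟩
      · rintro ⟨h0, hs⟩ i
        refine Fin.cases ?_ (fun j => ?_) i
        · exact h0
        · exact hs j
    have hFf : (fun u : Fin (k+2) → ℝ =>
        (∏ i, ENNReal.ofReal ((u i) ^ (α i - 1))) * h (∑ i, u i)) =
        fun u => f ((MeasurableEquiv.piFinSuccAbove (fun _ : Fin (k+2) => ℝ) 0) u) := by
      funext u
      rw [heapp u, hf]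
      simp only
      rw [Fin.prod_univ_succ, Fin.sum_univ_succ, mul_assoc]
    have key := (volume_preserving_piFinSuccAbove (fun _ : Fin (k+2) => ℝ)
      0).setLIntegral_comp_preimage_emb
      (MeasurableEquiv.piFinSuccAbove (fun _ : Fin (k+2) => ℝ) 0).measurableEmbedding
      f (Set.Ioi (0:ℝ) ×ˢ S')
    rw [hS, hFf, key, Measure.volume_eq_prod, ← Measure.prod_restrict,
      lintegral_prod _ hfmeas.aemeasurable]
    have hin : ∀ x : ℝ, (∫⁻ v in S', f (x, v)) =
        ENNReal.ofReal ((∏ j : Fin (k+1), Real.Gamma (α j.succ)) / Real.Gamma A') *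
          (ENNReal.ofReal (x ^ (α 0 - 1)) *
            ∫⁻ z in Set.Ioi (0:ℝ), ENNReal.ofReal (z ^ (A' - 1)) * h (x + z)) := by
      intro x
      have ih' := ih (fun j => α j.succ) (fun j => hα j.succ) (fun z => h (x + z))
        (hh.comp (measurable_const.add measurable_id))
      rw [hf]
      simp only []
      rw [lintegral_const_mul' _ _ ENNReal.ofReal_ne_top, ih', ← hA']
      ring
    simp_rw [hin]
    rw [lintegral_const_mul' _ _ ENNReal.ofReal_ne_top,
      conv_lemma (α 0) A' (hα 0) hA'pos h hh, ← mul_assoc, ← ENNReal.ofReal_mul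
        (div_nonneg (Finset.prod_nonneg fun j _ => (Real.Gamma_pos_of_pos (hα j.succ)).le)
          (Real.Gamma_pos_of_pos hA'pos).le)]
    congr 2
    · have hprod : (∏ i : Fin (k+2), Real.Gamma (α i))
          = Real.Gamma (α 0) * ∏ j : Fin (k+1), Real.Gamma (α j.succ) :=
        Fin.prod_univ_succ _
      have hsum : (∑ i : Fin (k+2), α i) = α 0 + A' := by rw [Fin.sum_univ_succ, ← hA']
      rw [hprod, hsum, div_mul_div_comm, ← mul_assoc,
        mul_comm (Real.Gamma A') (Real.Gamma (α 0 + A')),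
        mul_div_mul_right _ _ hΓA', mul_comm (Real.Gamma (α 0))]
    · rw [Fin.sum_univ_succ, ← hA']

/-- Dirichlet-type integral: for `α₁, …, α_k > 0` with `A = Σ αᵢ` and measurable
`h : [0,∞) → [0,∞]`,
`∫_{(0,∞)^k} (∏ uᵢ^{αᵢ-1}) h(Σ uᵢ) du = (∏ Γ(αᵢ)/Γ(A)) ∫₀^∞ z^{A-1} h(z) dz`. -/
theorem stmt7 (k : ℕ) (hk : 1 ≤ k) (α : Fin k → ℝ) (hα : ∀ i, 0 < α i)
    (A : ℝ) (hA : A = ∑ i, α i) (h : ℝ → ℝ≥0∞) (hh : Measurable h) :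
    ∫⁻ u : Fin k → ℝ in Set.univ.pi (fun _ : Fin k => Set.Ioi (0 : ℝ)),
        (∏ i, ENNReal.ofReal ((u i) ^ (α i - 1))) * h (∑ i, u i) =
      ENNReal.ofReal ((∏ i, Real.Gamma (α i)) / Real.Gamma A) *
        ∫⁻ z in Set.Ioi (0 : ℝ), ENNReal.ofReal (z ^ (A - 1)) * h z := by
  obtain ⟨n, rfl⟩ : ∃ n, k = n + 1 := ⟨k - 1, (Nat.succ_pred_eq_of_pos hk).symm⟩
  subst hA
  exact dirichlet_aux n α hα h hh
end

section
/- Let k ≥ 2, let n₀, n₁, …, n_k ≥ 1 be integers with m = n₁ + ⋯ + n_k and n* = n₀ + n₁ + ⋯ + n_k, and let β₁, …, β_k > 0. Then for all t₁ ∈ ℝ^{n₁}, …, t_{k-1} ∈ ℝ^{n_{k-1}}: ∫_{ℝ^{n_k}} Γ(n*/2)(∏_{i=1}^k β_i^{-n_i/2})/(Γ(n₀/2) π^{m/2}) · (1 + Σ_{i=1}^k β_i^{-1}‖t_i‖²)^{-n*/2} dt_k = Γ((n* - n_k)/2)(∏_{i=1}^{k-1} β_i^{-n_i/2})/(Γ(n₀/2)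 π^{(m - n_k)/2}) · (1 + Σ_{i=1}^{k-1} β_i^{-1}‖t_i‖²)^{-(n* - n_k)/2}. That is, if (t₁,…,t_k) follows the multivector variate t distribution with parameters (n₀,…,n_k; β₁,…,β_k), then the subvector (t₁,…,t_{k-1}) follows the multivector variate t distribution with parameters (n₀,…,n_{k-1}; β₁,…,β_{k-1}). -/
open MeasureTheory Set

namespace Stmt9Aux

lemma gauss_val (d : ℕ) {t : ℝ} (ht : 0 < t) :
    ∫ x : EuclideanSpace ℝ (Fin d), Real.exp (-(t * ‖x‖ ^ 2)) =
      (Real.pi / t) ^ ((d : ℝ) / 2) := by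
  have e := EuclideanSpace.volume_preserving_symm_measurableEquiv_toLp (Fin d)
  rw [← (MeasurePreserving.symm _ e).integral_comp']
  have hnorm : ∀ y : Fin d → ℝ,
      Real.exp (-(t * ‖(MeasurableEquiv.toLp 2 (Fin d → ℝ)).symm.symm y‖ ^ 2)) =
        ∏ i, Real.exp (-(t * y i ^ 2)) := by
    intro y
    rw [← Real.exp_sum]
    congr 1
    have : ‖(MeasurableEquiv.toLp 2 (Fin d → ℝ)).symm.symm y‖ ^ 2 = ∑ i, y i ^ 2 := by
      rw [EuclideanSpace.norm_eq, Real.sq_sqrt (by positivity)]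
      simp [sq_abs]
    rw [this, Finset.mul_sum, ← Finset.sum_neg_distrib]
  simp_rw [hnorm]
  rw [MeasureTheory.integral_fintype_prod_volume_eq_pow (fun u : ℝ => Real.exp (-(t * u ^ 2)))]
  have : ∫ u : ℝ, Real.exp (-(t * u ^ 2)) = Real.sqrt (Real.pi / t) := by
    simpa [neg_mul] using integral_gaussian t
  rw [this, Real.sqrt_eq_rpow, Fintype.card_fin, ← Real.rpow_natCast ((Real.pi / t) ^ ((1:ℝ)/2)) d,
    ← Real.rpow_mul (by positivity)]
  congr 1
  ring

lemma gauss_integrable (d : ℕ) {t : ℝ} (ht : 0 < t) :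
    Integrable (fun x : EuclideanSpace ℝ (Fin d) => Real.exp (-(t * ‖x‖ ^ 2))) := by
  have e := EuclideanSpace.volume_preserving_symm_measurableEquiv_toLp (Fin d)
  rw [← MeasurePreserving.integrable_comp_emb (MeasurePreserving.symm (MeasurableEquiv.toLp 2 (Fin d → ℝ)).symm e)
    (MeasurableEquiv.measurableEmbedding _)]
  have hnorm : ((fun x : EuclideanSpace ℝ (Fin d) => Real.exp (-(t * ‖x‖ ^ 2))) ∘
      (MeasurableEquiv.toLp 2 (Fin d → ℝ)).symm.symm) =
        fun y : Fin d → ℝ => ∏ i, Real.exp (-(t * y i ^ 2)) := by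
    ext y
    simp only [Function.comp_apply]
    rw [← Real.exp_sum]
    congr 1
    have : ‖(MeasurableEquiv.toLp 2 (Fin d → ℝ)).symm.symm y‖ ^ 2 = ∑ i, y i ^ 2 := by
      rw [EuclideanSpace.norm_eq, Real.sq_sqrt (by positivity)]
      simp [sq_abs]
    rw [this, Finset.mul_sum, ← Finset.sum_neg_distrib]
  rw [hnorm]
  exact Integrable.fintype_prod (f := fun _ : Fin d => fun u : ℝ => Real.exp (-(t * u ^ 2)))
    (fun _ => by simpa [neg_mul] using integrable_exp_neg_mul_sq ht)

lemma key (d : ℕ) {s : ℝ} (hs : (d : ℝ) / 2 < s) :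
    ∫ x : EuclideanSpace ℝ (Fin d), (1 + ‖x‖ ^ 2) ^ (-s) =
      Real.pi ^ ((d : ℝ) / 2) * Real.Gamma (s - (d : ℝ) / 2) / Real.Gamma s := by
  have hs0 : 0 < s := lt_of_le_of_lt (by positivity) hs
  have hsd : 0 < s - (d : ℝ) / 2 := by linarith
  have hG : Integrable (fun x : EuclideanSpace ℝ (Fin d) => (1 + ‖x‖ ^ 2) ^ (-s)) := by
    have hlt : (Module.finrank ℝ (EuclideanSpace ℝ (Fin d)) : ℝ) < 2 * s := by
      rw [finrank_euclideanSpace_fin]; linarith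
    have := integrable_rpow_neg_one_add_norm_sq (μ := (volume : Measure (EuclideanSpace ℝ (Fin d)))) hlt
    have hexp : -(2 * s) / 2 = -s := by ring
    simpa [hexp] using this
  set f : EuclideanSpace ℝ (Fin d) → ℝ → ℝ :=
    fun x t => t ^ (s - 1) * Real.exp (-((1 + ‖x‖ ^ 2) * t)) with hf
  have hmeas : Measurable (Function.uncurry f) := by
    rw [hf]
    fun_prop
  have step1 : ∀ x : EuclideanSpace ℝ (Fin d),
      ∫⁻ t in Ioi (0 : ℝ), ENNReal.ofReal (f x t) =
        ENNReal.ofReal (Real.Gamma s * (1 + ‖x‖ ^ 2) ^ (-s)) := by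
    intro x
    have ha : (0 : ℝ) < 1 + ‖x‖ ^ 2 := by positivity
    have hint : IntegrableOn (fun t : ℝ => t ^ (s - 1) *
        Real.exp (-((1 + ‖x‖ ^ 2) * t))) (Ioi 0) := by
      have h := integrableOn_rpow_mul_exp_neg_mul_rpow
        (s := s - 1) (p := 1) (b := 1 + ‖x‖ ^ 2) (by linarith) one_pos ha
      rw [show (fun t : ℝ => t ^ (s - 1) * Real.exp (-((1 + ‖x‖ ^ 2) * t))) =
          fun t : ℝ => t ^ (s - 1) * Real.exp (-(1 + ‖x‖ ^ 2) * t ^ (1 : ℝ)) from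
        funext fun t => by rw [Real.rpow_one, neg_mul]]
      exact h
    rw [← ofReal_integral_eq_lintegral_ofReal hint ?_]
    · rw [Real.integral_rpow_mul_exp_neg_mul_Ioi hs0 ha]
      congr 1
      rw [one_div, Real.inv_rpow ha.le, ← Real.rpow_neg ha.le, mul_comm]
    · filter_upwards [self_mem_ae_restrict measurableSet_Ioi] with u hu
      exact mul_nonneg (Real.rpow_nonneg (le_of_lt hu) _) (Real.exp_nonneg _)
  have step2 : ∀ u ∈ Ioi (0 : ℝ),
      ∫⁻ x : EuclideanSpace ℝ (Fin d), ENNReal.ofReal (f x u) =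
        ENNReal.ofReal (u ^ (s - 1) * Real.exp (-u) * (Real.pi / u) ^ ((d : ℝ) / 2)) := by
    intro u hu
    have hu' : (0 : ℝ) < u := hu
    have h1 : ∀ x : EuclideanSpace ℝ (Fin d),
        f x u = (u ^ (s - 1) * Real.exp (-u)) * Real.exp (-(u * ‖x‖ ^ 2)) := by
      intro x
      show u ^ (s - 1) * Real.exp (-((1 + ‖x‖ ^ 2) * u)) = _
      rw [show -((1 + ‖x‖ ^ 2) * u) = (-u) + (-(u * ‖x‖ ^ 2)) by ring, Real.exp_add]
      ring
    have hc : (0 : ℝ) ≤ u ^ (s - 1) * Real.exp (-u) := by positivity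
    simp_rw [h1, ENNReal.ofReal_mul hc]
    rw [lintegral_const_mul' _ _ ENNReal.ofReal_ne_top,
      ← ofReal_integral_eq_lintegral_ofReal (gauss_integrable d hu')
        (ae_of_all _ fun x => Real.exp_nonneg _),
      gauss_val d hu', ← ENNReal.ofReal_mul hc]
  have hswap : ∫⁻ x : EuclideanSpace ℝ (Fin d), ∫⁻ t in Ioi (0 : ℝ), ENNReal.ofReal (f x t) =
      ∫⁻ t in Ioi (0 : ℝ), ∫⁻ x : EuclideanSpace ℝ (Fin d), ENNReal.ofReal (f x t) := by
    exact lintegral_lintegral_swap (ENNReal.measurable_ofReal.comp hmeas).aemeasurable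
  have step4 : ∫⁻ u in Ioi (0 : ℝ),
      ENNReal.ofReal (u ^ (s - 1) * Real.exp (-u) * (Real.pi / u) ^ ((d : ℝ) / 2)) =
        ENNReal.ofReal (Real.pi ^ ((d : ℝ) / 2) * Real.Gamma (s - (d : ℝ) / 2)) := by
    have hcong : ∀ u ∈ Ioi (0 : ℝ),
        ENNReal.ofReal (u ^ (s - 1) * Real.exp (-u) * (Real.pi / u) ^ ((d : ℝ) / 2)) =
          ENNReal.ofReal (Real.pi ^ ((d : ℝ) / 2) *
            (u ^ (s - (d : ℝ) / 2 - 1) * Real.exp (-(1 * u)))) := by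
      intro u hu
      have hu' : (0 : ℝ) < u := hu
      congr 1
      have h1 : (Real.pi / u) ^ ((d : ℝ) / 2) =
          Real.pi ^ ((d : ℝ) / 2) * (u ^ ((d : ℝ) / 2))⁻¹ := by
        rw [Real.div_rpow Real.pi_pos.le hu'.le, div_eq_mul_inv]
      have h2 : u ^ (s - (d : ℝ) / 2 - 1) = u ^ (s - 1) * (u ^ ((d : ℝ) / 2))⁻¹ := by
        rw [show s - (d : ℝ) / 2 - 1 = (s - 1) - (d : ℝ) / 2 by ring, Real.rpow_sub hu',
          div_eq_mul_inv]
      rw [h1, h2, one_mul]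
      ring
    rw [setLIntegral_congr_fun measurableSet_Ioi hcong]
    have hπ : (0 : ℝ) ≤ Real.pi ^ ((d : ℝ) / 2) := by positivity
    simp_rw [ENNReal.ofReal_mul hπ]
    have hint2 : IntegrableOn (fun u : ℝ => u ^ (s - (d : ℝ) / 2 - 1) *
        Real.exp (-(1 * u))) (Ioi 0) := by
      have h := integrableOn_rpow_mul_exp_neg_mul_rpow
        (s := s - (d : ℝ) / 2 - 1) (p := 1) (b := 1) (by linarith) one_pos one_pos
      rw [show (fun u : ℝ => u ^ (s - (d : ℝ) / 2 - 1) * Real.exp (-(1 * u))) =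
          fun u : ℝ => u ^ (s - (d : ℝ) / 2 - 1) * Real.exp (-1 * u ^ (1 : ℝ)) from
        funext fun u => by rw [Real.rpow_one, neg_mul]]
      exact h
    rw [lintegral_const_mul' _ _ ENNReal.ofReal_ne_top,
      ← ofReal_integral_eq_lintegral_ofReal hint2 ?_]
    · rw [Real.integral_rpow_mul_exp_neg_mul_Ioi hsd one_pos]
      norm_num [Real.one_rpow]
    · filter_upwards [self_mem_ae_restrict measurableSet_Ioi] with u hu
      exact mul_nonneg (Real.rpow_nonneg (le_of_lt hu) _) (Real.exp_nonneg _)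
  have hGnn : (0 : ℝ) ≤ Real.Gamma s := Real.Gamma_nonneg_of_nonneg hs0.le
  have hmain : ENNReal.ofReal (Real.Gamma s *
      ∫ x : EuclideanSpace ℝ (Fin d), (1 + ‖x‖ ^ 2) ^ (-s)) =
        ENNReal.ofReal (Real.pi ^ ((d : ℝ) / 2) * Real.Gamma (s - (d : ℝ) / 2)) := by
    rw [ENNReal.ofReal_mul hGnn,
      ofReal_integral_eq_lintegral_ofReal hG (ae_of_all _ fun x => Real.rpow_nonneg (by positivity) _),
      ← lintegral_const_mul' _ _ ENNReal.ofReal_ne_top]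
    calc ∫⁻ x : EuclideanSpace ℝ (Fin d),
          ENNReal.ofReal (Real.Gamma s) * ENNReal.ofReal ((1 + ‖x‖ ^ 2) ^ (-s))
        = ∫⁻ x : EuclideanSpace ℝ (Fin d), ∫⁻ t in Ioi (0 : ℝ), ENNReal.ofReal (f x t) := by
          refine lintegral_congr fun x => ?_
          rw [step1 x, ENNReal.ofReal_mul hGnn]
      _ = ∫⁻ t in Ioi (0 : ℝ), ∫⁻ x : EuclideanSpace ℝ (Fin d), ENNReal.ofReal (f x t) := hswap
      _ = ∫⁻ u in Ioi (0 : ℝ),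
            ENNReal.ofReal (u ^ (s - 1) * Real.exp (-u) * (Real.pi / u) ^ ((d : ℝ) / 2)) :=
          setLIntegral_congr_fun measurableSet_Ioi step2
      _ = _ := step4
  have hreal : Real.Gamma s * ∫ x : EuclideanSpace ℝ (Fin d), (1 + ‖x‖ ^ 2) ^ (-s) =
      Real.pi ^ ((d : ℝ) / 2) * Real.Gamma (s - (d : ℝ) / 2) := by
    have h1 : (0 : ℝ) ≤ Real.Gamma s *
        ∫ x : EuclideanSpace ℝ (Fin d), (1 + ‖x‖ ^ 2) ^ (-s) :=
      mul_nonneg hGnn (integral_nonneg fun x => Real.rpow_nonneg (by positivity) _)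
    have h2 : (0 : ℝ) ≤ Real.pi ^ ((d : ℝ) / 2) * Real.Gamma (s - (d : ℝ) / 2) := by
      have := Real.Gamma_nonneg_of_nonneg hsd.le
      positivity
    exact (ENNReal.ofReal_eq_ofReal_iff h1 h2).mp hmain
  rw [eq_div_iff (Real.Gamma_pos_of_pos hs0).ne', mul_comm]
  exact hreal

lemma key2 (d : ℕ) {a b s : ℝ} (ha : 0 < a) (hb : 0 < b) (hs : (d : ℝ) / 2 < s) :
    ∫ x : EuclideanSpace ℝ (Fin d), (a + b * ‖x‖ ^ 2) ^ (-s) =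
      a ^ ((d : ℝ) / 2 - s) * b ^ (-((d : ℝ) / 2)) *
        (Real.pi ^ ((d : ℝ) / 2) * Real.Gamma (s - (d : ℝ) / 2) / Real.Gamma s) := by
  set c := Real.sqrt (a / b) with hc_def
  have hc : 0 < c := Real.sqrt_pos.mpr (by positivity)
  have hc2 : b * c ^ 2 = a := by
    rw [hc_def, Real.sq_sqrt (by positivity : (0:ℝ) ≤ a / b)]
    field_simp
  have hcomp : ∀ x : EuclideanSpace ℝ (Fin d),
      (a + b * ‖c • x‖ ^ 2) ^ (-s) = a ^ (-s) * (1 + ‖x‖ ^ 2) ^ (-s) := by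
    intro x
    have hnorm : ‖c • x‖ = c * ‖x‖ := by
      rw [norm_smul, Real.norm_eq_abs, abs_of_pos hc]
    rw [hnorm, mul_pow,
      show a + b * (c ^ 2 * ‖x‖ ^ 2) = a * (1 + ‖x‖ ^ 2) by rw [← hc2]; ring,
      Real.mul_rpow ha.le (by positivity)]
  have hsc := MeasureTheory.Measure.integral_comp_smul (volume)
    (fun y : EuclideanSpace ℝ (Fin d) => (a + b * ‖y‖ ^ 2) ^ (-s)) c
  simp only [hcomp, finrank_euclideanSpace_fin, smul_eq_mul] at hsc
  rw [MeasureTheory.integral_const_mul, key d hs,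
    abs_of_pos (by positivity : (0:ℝ) < (c ^ d)⁻¹)] at hsc
  have hcdne : (c : ℝ) ^ d ≠ 0 := by positivity
  have hI : ∫ x : EuclideanSpace ℝ (Fin d), (a + b * ‖x‖ ^ 2) ^ (-s) =
      c ^ d * (a ^ (-s) *
        (Real.pi ^ ((d : ℝ) / 2) * Real.Gamma (s - (d : ℝ) / 2) / Real.Gamma s)) := by
    rw [hsc, ← mul_assoc, mul_inv_cancel₀ hcdne, one_mul]
  rw [hI]
  have hcd : c ^ d = a ^ ((d : ℝ) / 2) * b ^ (-((d : ℝ) / 2)) := by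
    have h1 : c ^ d = (a / b) ^ ((d : ℝ) / 2) := by
      rw [← Real.rpow_natCast c d, hc_def, Real.sqrt_eq_rpow,
        ← Real.rpow_mul (by positivity : (0:ℝ) ≤ a / b)]
      congr 1
      ring
    rw [h1, Real.div_rpow ha.le hb.le, Real.rpow_neg hb.le, div_eq_mul_inv]
  rw [hcd]
  rw [show a ^ ((d : ℝ) / 2 - s) = a ^ ((d : ℝ) / 2) * a ^ (-s) by
    rw [← Real.rpow_add ha]; ring_nf]
  ring

end Stmt9Aux

open Stmt9Aux

/-- Marginals of the multivector variate t distribution: integrating the multivector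
variate t density with parameters `(n₀, n₁, …, n_{k+1}; β₁, …, β_{k+1})` (here the
blocks are indexed by `Fin (k+1)`, with `k ≥ 1`, so that there are at least two
blocks) over its last block yields the multivector variate t density with parameters
`(n₀, n₁, …, n_k; β₁, …, β_k)` at the remaining blocks. -/
theorem stmt9 (k : ℕ) (hk : 1 ≤ k) (n₀ : ℕ) (hn₀ : 1 ≤ n₀)
    (n : Fin (k + 1) → ℕ) (hn : ∀ i, 1 ≤ n i)
    (β : Fin (k + 1) → ℝ) (hβ : ∀ i, 0 < β i)
    (m nstar : ℕ) (hm : m = ∑ i, n i) (hns : nstar = n₀ + m) :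
    ∀ t : Π i : Fin k, EuclideanSpace ℝ (Fin (n i.castSucc)),
      (∫ x : EuclideanSpace ℝ (Fin (n (Fin.last k))),
          Real.Gamma ((nstar : ℝ) / 2) * (∏ i, (β i) ^ (-((n i : ℝ) / 2))) /
              (Real.Gamma ((n₀ : ℝ) / 2) * Real.pi ^ ((m : ℝ) / 2)) *
            (1 + ((∑ i : Fin k, (β i.castSucc)⁻¹ * ‖t i‖ ^ 2) +
                (β (Fin.last k))⁻¹ * ‖x‖ ^ 2)) ^ (-((nstar : ℝ) / 2))) =
        Real.Gamma (((nstar : ℝ) - n (Fin.last k)) / 2) *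
            (∏ i : Fin k, (β i.castSucc) ^ (-((n i.castSucc : ℝ) / 2))) /
            (Real.Gamma ((n₀ : ℝ) / 2) * Real.pi ^ (((m : ℝ) - n (Fin.last k)) / 2)) *
          (1 + ∑ i : Fin k, (β i.castSucc)⁻¹ * ‖t i‖ ^ 2) ^
            (-(((nstar : ℝ) - n (Fin.last k)) / 2)) := by
  
  intro t
  have hbl : 0 < β (Fin.last k) := hβ _
  have hb : 0 < (β (Fin.last k))⁻¹ := inv_pos.mpr hbl
  set S := ∑ i : Fin k, (β i.castSucc)⁻¹ * ‖t i‖ ^ 2 with hS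
  have hSnn : 0 ≤ S := Finset.sum_nonneg fun i _ =>
    mul_nonneg (inv_nonneg.mpr (hβ _).le) (sq_nonneg _)
  have ha : (0 : ℝ) < 1 + S := by linarith
  have hdlt : ((n (Fin.last k) : ℝ)) < (nstar : ℝ) := by
    have h1 : n (Fin.last k) ≤ m := hm ▸ Finset.single_le_sum (f := fun i => n i)
      (fun i _ => Nat.zero_le _) (Finset.mem_univ _)
    have h2 : n (Fin.last k) < nstar := by omega
    exact_mod_cast h2
  have hs2 : ((n (Fin.last k) : ℝ)) / 2 < (nstar : ℝ) / 2 := by linarith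
  simp_rw [show ∀ r : ℝ, 1 + (S + r) = (1 + S) + r from fun r => (add_assoc 1 S r).symm]
  rw [MeasureTheory.integral_const_mul, Stmt9Aux.key2 (n (Fin.last k)) ha hb hs2]
  have hprod : (∏ i, (β i) ^ (-((n i : ℝ) / 2))) =
      (∏ i : Fin k, (β i.castSucc) ^ (-((n i.castSucc : ℝ) / 2))) *
        (β (Fin.last k)) ^ (-((n (Fin.last k) : ℝ) / 2)) := Fin.prod_univ_castSucc _
  rw [hprod]
  have hβinv : ((β (Fin.last k))⁻¹ : ℝ) ^ (-((n (Fin.last k) : ℝ) / 2)) =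
      (β (Fin.last k)) ^ ((n (Fin.last k) : ℝ) / 2) := by
    rw [Real.inv_rpow hbl.le, ← Real.rpow_neg hbl.le, neg_neg]
  rw [hβinv]
  have hΓarg : (nstar : ℝ) / 2 - (n (Fin.last k) : ℝ) / 2 =
      ((nstar : ℝ) - (n (Fin.last k) : ℝ)) / 2 := by ring
  rw [hΓarg]
  have hexp : (n (Fin.last k) : ℝ) / 2 - (nstar : ℝ) / 2 =
      -(((nstar : ℝ) - (n (Fin.last k) : ℝ)) / 2) := by ring
  rw [hexp]
  have hπm : Real.pi ^ ((m : ℝ) / 2) =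
      Real.pi ^ (((m : ℝ) - (n (Fin.last k) : ℝ)) / 2) *
        Real.pi ^ ((n (Fin.last k) : ℝ) / 2) := by
    rw [← Real.rpow_add Real.pi_pos]
    congr 1
    ring
  have hΓ0 : Real.Gamma ((n₀ : ℝ) / 2) ≠ 0 := by
    have : (0 : ℝ) < n₀ := by exact_mod_cast hn₀
    exact (Real.Gamma_pos_of_pos (by linarith)).ne'
  have hΓ1 : Real.Gamma ((nstar : ℝ) / 2) ≠ 0 := by
    have : (0 : ℝ) < (nstar : ℝ) := lt_of_le_of_lt (Nat.cast_nonneg _) hdlt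
    exact (Real.Gamma_pos_of_pos (by linarith)).ne'
  have hbpow : (β (Fin.last k)) ^ ((n (Fin.last k) : ℝ) / 2) ≠ 0 :=
    (Real.rpow_pos_of_pos hbl _).ne'
  have hπ1 : Real.pi ^ (((m : ℝ) - (n (Fin.last k) : ℝ)) / 2) ≠ 0 :=
    (Real.rpow_pos_of_pos Real.pi_pos _).ne'
  have hπ2 : Real.pi ^ ((n (Fin.last k) : ℝ) / 2) ≠ 0 :=
    (Real.rpow_pos_of_pos Real.pi_pos _).ne'
  rw [Real.rpow_neg hbl.le, hπm]
  field_simp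
end

section
/- Let k ≥ 1, let α₀, α₁, …, α_k > 0 and β₁, …, β_k > 0 be real numbers, and set α* = α₀ + α₁ + ⋯ + α_k. Then ∫_{(0,∞)^k} ∏_{i=1}^k f_i^{α_i - 1} · (1 + Σ_{i=1}^k β_i^{-1} f_i)^{-α*} df₁ ⋯ df_k = (∏_{i=1}^k β_i^{α_i}) · Γ(α₀) (∏_{i=1}^k Γ(α_i)) / Γ(α*). Consequently the multivariate beta type II (multivariate F) density with parameters (α₀,…,α_k; β₁,…,β_k) integrates to 1 over (0,∞)^k. -/
open MeasureTheory Set Real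
open scoped ENNReal

lemma gsc_integral {a r : ℝ} (ha : 0 < a) (hr : 0 < r) :
    ∫ t : ℝ in Ioi 0, t ^ (a - 1) * Real.exp (-(r * t)) = r ^ (-a) * Real.Gamma a := by
  rw [Real.integral_rpow_mul_exp_neg_mul_Ioi ha hr, one_div, Real.inv_rpow hr.le,
    ← Real.rpow_neg hr.le]

lemma gsc_integrable {a r : ℝ} (ha : 0 < a) (hr : 0 < r) :
    IntegrableOn (fun t : ℝ => t ^ (a - 1) * Real.exp (-(r * t))) (Ioi 0) := by
  have := integrableOn_rpow_mul_exp_neg_mul_rpow (p := 1) (s := a - 1) (b := r)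
    (by linarith) one_pos hr
  simpa [Real.rpow_one] using this

lemma gsc_lintegral {a r : ℝ} (ha : 0 < a) (hr : 0 < r) :
    ∫⁻ t in Ioi (0:ℝ), ENNReal.ofReal (t ^ (a - 1) * Real.exp (-(r * t))) =
      ENNReal.ofReal (r ^ (-a) * Real.Gamma a) := by
  rw [← ofReal_integral_eq_lintegral_ofReal (gsc_integrable ha hr) ?_, gsc_integral ha hr]
  filter_upwards [ae_restrict_mem measurableSet_Ioi] with t ht
  have ht' : (0:ℝ) < t := ht
  positivity

lemma one_dim {a s b c : ℝ} (ha : 0 < a) (has : a < s) (hb : 0 < b) (hc : 0 < c) :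
    ∫⁻ x in Ioi (0:ℝ), ENNReal.ofReal (x ^ (a - 1) * (c + b * x) ^ (-s)) =
      ENNReal.ofReal (c ^ (a - s) * b ^ (-a) *
        (Real.Gamma a * Real.Gamma (s - a) / Real.Gamma s)) := by
  have hs : 0 < s := ha.trans has
  have hΓs : 0 < Real.Gamma s := Real.Gamma_pos_of_pos hs
  have key : ∀ᵐ x ∂(volume : Measure ℝ), x ∈ Ioi (0:ℝ) →
      ENNReal.ofReal (x ^ (a - 1) * (c + b * x) ^ (-s)) =
      ∫⁻ t in Ioi (0:ℝ), ENNReal.ofReal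
        (((Real.Gamma s)⁻¹ * x ^ (a - 1)) * (t ^ (s - 1) * Real.exp (-((c + b * x) * t)))) := by
    refine Filter.Eventually.of_forall (fun x hx => ?_)
    have hx' : (0:ℝ) < x := hx
    have hr : 0 < c + b * x := by positivity
    have hK : (0:ℝ) ≤ (Real.Gamma s)⁻¹ * x ^ (a - 1) := by positivity
    simp_rw [ENNReal.ofReal_mul hK]
    rw [lintegral_const_mul' _ _ ENNReal.ofReal_ne_top, gsc_lintegral hs hr,
      ← ENNReal.ofReal_mul hK]
    congr 1
    rw [Real.rpow_neg hr.le]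
    field_simp
  rw [setLIntegral_congr_fun_ae measurableSet_Ioi key]
  have hmeas : AEMeasurable (Function.uncurry fun (x t : ℝ) => ENNReal.ofReal
      (((Real.Gamma s)⁻¹ * x ^ (a - 1)) * (t ^ (s - 1) * Real.exp (-((c + b * x) * t)))))
      ((volume.restrict (Ioi 0)).prod (volume.restrict (Ioi 0))) := by
    apply Measurable.aemeasurable
    apply Measurable.ennreal_ofReal
    fun_prop
  rw [lintegral_lintegral_swap hmeas]
  have inner : ∀ᵐ t ∂(volume : Measure ℝ), t ∈ Ioi (0:ℝ) →
      (∫⁻ x in Ioi (0:ℝ), ENNReal.ofReal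
        (((Real.Gamma s)⁻¹ * x ^ (a - 1)) * (t ^ (s - 1) * Real.exp (-((c + b * x) * t))))) =
      ENNReal.ofReal (((Real.Gamma s)⁻¹ * Real.Gamma a * b ^ (-a)) *
        (t ^ (s - a - 1) * Real.exp (-(c * t)))) := by
    refine Filter.Eventually.of_forall (fun t ht => ?_)
    have ht' : (0:ℝ) < t := ht
    have hbt : 0 < b * t := mul_pos hb ht'
    have hC : (0:ℝ) ≤ (Real.Gamma s)⁻¹ * (t ^ (s - 1) * Real.exp (-(c * t))) := by positivity
    have ptwise : ∀ x : ℝ, ((Real.Gamma s)⁻¹ * x ^ (a - 1)) *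
        (t ^ (s - 1) * Real.exp (-((c + b * x) * t))) =
        ((Real.Gamma s)⁻¹ * (t ^ (s - 1) * Real.exp (-(c * t)))) *
        (x ^ (a - 1) * Real.exp (-((b * t) * x))) := by
      intro x
      have : Real.exp (-((c + b * x) * t)) = Real.exp (-(c * t)) * Real.exp (-((b * t) * x)) := by
        rw [← Real.exp_add]; ring_nf
      rw [this]; ring
    simp_rw [ptwise, ENNReal.ofReal_mul hC]
    rw [lintegral_const_mul' _ _ ENNReal.ofReal_ne_top, gsc_lintegral ha hbt,
      ← ENNReal.ofReal_mul hC]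
    congr 1
    rw [Real.mul_rpow hb.le ht'.le]
    rw [show t ^ (s - a - 1) = t ^ (s - 1) * t ^ (-a) by
      rw [← Real.rpow_add ht']; ring_nf]
    ring
  rw [setLIntegral_congr_fun_ae measurableSet_Ioi inner]
  have hC2 : (0:ℝ) ≤ (Real.Gamma s)⁻¹ * Real.Gamma a * b ^ (-a) := by positivity
  simp_rw [ENNReal.ofReal_mul hC2]
  rw [lintegral_const_mul' _ _ ENNReal.ofReal_ne_top,
    show s - a - 1 = (s - a) - 1 by ring, gsc_lintegral (by linarith : 0 < s - a) hc,
    ← ENNReal.ofReal_mul hC2]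
  congr 1
  rw [show a - s = -(s - a) by ring]
  field_simp
lemma aux_lintegral : ∀ (k : ℕ) (α₀ : ℝ), 0 < α₀ → ∀ (α β : Fin k → ℝ),
    (∀ i, 0 < α i) → (∀ i, 0 < β i) →
    ∫⁻ f in Set.univ.pi (fun _ : Fin k => Ioi (0:ℝ)),
      ENNReal.ofReal ((∏ i, (f i) ^ (α i - 1)) * (1 + ∑ i, (β i)⁻¹ * f i) ^ (-(α₀ + ∑ i, α i)))
      = ENNReal.ofReal ((∏ i, (β i) ^ (α i)) * (Real.Gamma α₀ * ∏ i, Real.Gamma (α i)) /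
          Real.Gamma (α₀ + ∑ i, α i)) := by
  intro k
  induction k with
  | zero =>
    intro α₀ hα₀ α β hα hβ
    have hS : Set.univ.pi (fun _ : Fin 0 => Ioi (0:ℝ)) = Set.univ := by
      ext f; simp
    rw [hS]
    simp only [Finset.univ_eq_empty, Finset.prod_empty, Finset.sum_empty, one_mul, mul_one,
      add_zero]
    rw [lintegral_const]
    have h1 : (volume : Measure (Fin 0 → ℝ)) Set.univ = 1 := by
      simp [volume_pi, Measure.pi_univ]
    rw [Measure.restrict_univ, h1, mul_one, Real.one_rpow,
      div_self (Real.Gamma_pos_of_pos hα₀).ne']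
  | succ n IH =>
    intro α₀ hα₀ α β hα hβ
    set s : ℝ := α₀ + ∑ i, α i with hs_def
    have hsum : s = α₀ + (α 0 + ∑ j : Fin n, α j.succ) := by
      rw [hs_def, Fin.sum_univ_succ]
    have hsum_nonneg : 0 ≤ ∑ j : Fin n, α j.succ :=
      Finset.sum_nonneg fun j _ => (hα j.succ).le
    have hlt : α 0 < s := by rw [hsum]; linarith
    have htpos : 0 < α₀ + ∑ j : Fin n, α j.succ := by linarith
    have hspos : 0 < s := by linarith [hα 0]
    have hX0 : (0:ℝ) ≤ Real.Gamma (α 0) * Real.Gamma (s - α 0) / Real.Gamma s :=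
      div_nonneg (mul_nonneg (Real.Gamma_pos_of_pos (hα 0)).le
        (Real.Gamma_pos_of_pos (by linarith : 0 < s - α 0)).le)
        (Real.Gamma_pos_of_pos hspos).le
    have hC0 : (0:ℝ) ≤ (β 0) ^ (α 0) *
        (Real.Gamma (α 0) * Real.Gamma (s - α 0) / Real.Gamma s) :=
      mul_nonneg (Real.rpow_pos_of_pos (hβ 0) _).le hX0
    have hΓ := fun (x : ℝ) (hx : 0 < x) => Real.Gamma_pos_of_pos hx
    -- the measurable equivalence peeling off coordinate 0
    set e := MeasurableEquiv.piFinSuccAbove (fun _ : Fin (n+1) => ℝ) 0 with he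
    have hmp : MeasurePreserving e.symm
        ((volume : Measure ℝ).prod (volume : Measure (Fin n → ℝ))) volume :=
      (volume_preserving_piFinSuccAbove (fun _ : Fin (n+1) => ℝ) 0).symm _
    set G : (Fin (n+1) → ℝ) → ℝ≥0∞ := fun f =>
      ENNReal.ofReal ((∏ i, (f i) ^ (α i - 1)) * (1 + ∑ i, (β i)⁻¹ * f i) ^ (-s)) with hG
    have hesymm : ∀ p : ℝ × (Fin n → ℝ), e.symm p = Fin.cons p.1 p.2 := by
      intro p
      simp [he, MeasurableEquiv.piFinSuccAbove_symm_apply, Fin.insertNthEquiv,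
        Fin.insertNth_zero]
    have hpre : e.symm ⁻¹' (Set.univ.pi (fun _ : Fin (n+1) => Ioi (0:ℝ))) =
        (Ioi (0:ℝ)) ×ˢ (Set.univ.pi (fun _ : Fin n => Ioi (0:ℝ))) := by
      ext p
      simp only [Set.mem_preimage, hesymm, Set.mem_pi, Set.mem_univ, forall_true_left,
        Set.mem_prod, Fin.forall_fin_succ, Fin.cons_zero, Fin.cons_succ, true_implies]
    have step1 : (∫⁻ f in Set.univ.pi (fun _ : Fin (n+1) => Ioi (0:ℝ)), G f) =
        ∫⁻ p in (Ioi (0:ℝ)) ×ˢ (Set.univ.pi (fun _ : Fin n => Ioi (0:ℝ))),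
          G (e.symm p) ∂((volume : Measure ℝ).prod (volume : Measure (Fin n → ℝ))) := by
      rw [← hmp.setLIntegral_comp_preimage_emb e.symm.measurableEmbedding, hpre]
    rw [step1, ← Measure.prod_restrict]
    have hGmeas : Measurable G := by
      apply Measurable.ennreal_ofReal
      fun_prop
    rw [lintegral_prod_symm (fun p : ℝ × (Fin n → ℝ) => G (e.symm p))
      ((hGmeas.comp e.symm.measurable).aemeasurable)]
    -- inner integral computation
    have hinner : ∀ᵐ y ∂(volume : Measure (Fin n → ℝ)),
        y ∈ Set.univ.pi (fun _ : Fin n => Ioi (0:ℝ)) →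
        (∫⁻ x in Ioi (0:ℝ), G (e.symm (x, y))) =
          ENNReal.ofReal ((β 0) ^ (α 0) * (Real.Gamma (α 0) * Real.Gamma (s - α 0) /
            Real.Gamma s)) *
          ENNReal.ofReal ((∏ j : Fin n, (y j) ^ (α j.succ - 1)) *
            (1 + ∑ j : Fin n, (β j.succ)⁻¹ * y j) ^ (-(α₀ + ∑ j : Fin n, α j.succ))) := by
      refine Filter.Eventually.of_forall (fun y hy => ?_)
      have hyj : ∀ j, 0 < y j := fun j => hy j (Set.mem_univ _)
      set K : ℝ := ∏ j : Fin n, (y j) ^ (α j.succ - 1) with hK_def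
      have hK : 0 ≤ K := Finset.prod_nonneg fun j _ => (Real.rpow_pos_of_pos (hyj j) _).le
      set c : ℝ := 1 + ∑ j : Fin n, (β j.succ)⁻¹ * y j with hc_def
      have hc : 0 < c := by
        have : 0 ≤ ∑ j : Fin n, (β j.succ)⁻¹ * y j :=
          Finset.sum_nonneg fun j _ => le_of_lt (mul_pos (inv_pos.2 (hβ _)) (hyj j))
        rw [hc_def]; linarith
      have hform : ∀ x : ℝ, G (e.symm (x, y)) =
          ENNReal.ofReal (K * (x ^ (α 0 - 1) * (c + (β 0)⁻¹ * x) ^ (-s))) := by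
        intro x
        rw [hesymm]
        simp only [hG]
        congr 1
        rw [Fin.prod_univ_succ, Fin.sum_univ_succ]
        simp only [Fin.cons_zero, Fin.cons_succ]
        rw [show (1 + ((β 0)⁻¹ * x + ∑ j : Fin n, (β j.succ)⁻¹ * y j)) =
          c + (β 0)⁻¹ * x by rw [hc_def]; ring]
        ring
      simp_rw [hform, ENNReal.ofReal_mul hK]
      rw [lintegral_const_mul' _ _ ENNReal.ofReal_ne_top,
        one_dim (hα 0) hlt (inv_pos.2 (hβ 0)) hc]
      have h1 : ((β 0)⁻¹ : ℝ) ^ (-(α 0)) = (β 0) ^ (α 0) := by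
        rw [Real.inv_rpow (hβ 0).le, Real.rpow_neg (hβ 0).le, inv_inv]
      have h2 : α 0 - s = -(α₀ + ∑ j : Fin n, α j.succ) := by rw [hsum]; ring
      rw [← ENNReal.ofReal_mul hK, ← ENNReal.ofReal_mul hK,
        ← ENNReal.ofReal_mul hC0]
      congr 1
      rw [h1, h2]
      ring
    rw [setLIntegral_congr_fun_ae (MeasurableSet.univ_pi fun _ => measurableSet_Ioi) hinner,
      lintegral_const_mul' _ _ ENNReal.ofReal_ne_top,
      IH α₀ hα₀ (fun j => α j.succ) (fun j => β j.succ) (fun j => hα _) (fun j => hβ _),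
      ← ENNReal.ofReal_mul hC0]
    congr 1
    have hΓt : Real.Gamma (α₀ + ∑ j : Fin n, α j.succ) ≠ 0 :=
      (Real.Gamma_pos_of_pos htpos).ne'
    have hst : s - α 0 = α₀ + ∑ j : Fin n, α j.succ := by rw [hsum]; ring
    rw [hst, Fin.prod_univ_succ (fun i => (β i) ^ (α i)),
      Fin.prod_univ_succ (fun i => Real.Gamma (α i))]
    field_simp

/-- Normalisation of the multivariate beta type II (multivariate F) distribution over
`(0,∞)^k`, together with the fact that the corresponding density integrates to 1. -/
theorem stmt13 (k : ℕ) (hk : 1 ≤ k) (α₀ : ℝ) (hα₀ : 0 < α₀)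
    (α β : Fin k → ℝ) (hα : ∀ i, 0 < α i) (hβ : ∀ i, 0 < β i)
    (αstar : ℝ) (hs : αstar = α₀ + ∑ i, α i) :
    (∫ f : Fin k → ℝ in Set.univ.pi (fun _ : Fin k => Set.Ioi (0 : ℝ)),
        (∏ i, (f i) ^ (α i - 1)) * (1 + ∑ i, (β i)⁻¹ * f i) ^ (-αstar)) =
        (∏ i, (β i) ^ (α i)) * (Real.Gamma α₀ * ∏ i, Real.Gamma (α i)) /
          Real.Gamma αstar ∧
      (∫ f : Fin k → ℝ in Set.univ.pi (fun _ : Fin k => Set.Ioi (0 : ℝ)),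
          (∏ i, (β i) ^ (-α i)) * Real.Gamma αstar /
              (Real.Gamma α₀ * ∏ i, Real.Gamma (α i)) *
            ((∏ i, (f i) ^ (α i - 1)) * (1 + ∑ i, (β i)⁻¹ * f i) ^ (-αstar))) = 1 := by
  subst hs
  set αstar : ℝ := α₀ + ∑ i, α i with hstar
  have hstarpos : 0 < αstar := by
    have := Finset.sum_nonneg fun i (_ : i ∈ Finset.univ) => (hα i).le
    rw [hstar]; linarith
  have hΓ0 : 0 < Real.Gamma α₀ := Real.Gamma_pos_of_pos hα₀
  have hΓs : 0 < Real.Gamma αstar := Real.Gamma_pos_of_pos hstarpos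
  have hΓp : 0 < ∏ i, Real.Gamma (α i) :=
    Finset.prod_pos fun i _ => Real.Gamma_pos_of_pos (hα i)
  set S : Set (Fin k → ℝ) := Set.univ.pi (fun _ : Fin k => Ioi (0:ℝ)) with hS
  set F : (Fin k → ℝ) → ℝ := fun f =>
    (∏ i, (f i) ^ (α i - 1)) * (1 + ∑ i, (β i)⁻¹ * f i) ^ (-αstar) with hF
  have hFmeas : Measurable F := by fun_prop
  have hRHS : (0:ℝ) ≤ (∏ i, (β i) ^ (α i)) *
      (Real.Gamma α₀ * ∏ i, Real.Gamma (α i)) / Real.Gamma αstar := by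
    have : (0:ℝ) ≤ ∏ i, (β i) ^ (α i) :=
      Finset.prod_nonneg fun i _ => (Real.rpow_pos_of_pos (hβ i) _).le
    positivity
  have hmain : (∫ f in S, F f) = (∏ i, (β i) ^ (α i)) *
      (Real.Gamma α₀ * ∏ i, Real.Gamma (α i)) / Real.Gamma αstar := by
    rw [integral_eq_lintegral_of_nonneg_ae ?_ (hFmeas.aestronglyMeasurable)]
    · rw [hF]
      simp only []
      rw [aux_lintegral k α₀ hα₀ α β hα hβ, ENNReal.toReal_ofReal hRHS]
    · filter_upwards [ae_restrict_mem (MeasurableSet.univ_pi fun _ => measurableSet_Ioi)]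
        with f hf
      have hfi : ∀ i, 0 < f i := fun i => hf i (Set.mem_univ i)
      have hbase : 0 < 1 + ∑ i, (β i)⁻¹ * f i := by
        have : 0 ≤ ∑ i, (β i)⁻¹ * f i :=
          Finset.sum_nonneg fun i _ => (mul_pos (inv_pos.2 (hβ i)) (hfi i)).le
        linarith
      exact mul_nonneg
        (Finset.prod_nonneg fun i _ => (Real.rpow_pos_of_pos (hfi i) _).le)
        (Real.rpow_pos_of_pos hbase _).le
  refine ⟨hmain, ?_⟩
  rw [MeasureTheory.integral_const_mul, hmain]
  have hPmP : (∏ i, (β i) ^ (-α i)) * (∏ i, (β i) ^ (α i)) = 1 := by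
    rw [← Finset.prod_mul_distrib]
    have h1 : ∀ i ∈ Finset.univ, (β i) ^ (-α i) * (β i) ^ (α i) = 1 := fun i _ => by
      rw [← Real.rpow_add (hβ i), neg_add_cancel, Real.rpow_zero]
    rw [Finset.prod_congr rfl h1, Finset.prod_const_one]
  field_simp
  linear_combination hPmP
end

section
/- Let k ≥ 1, let n₀, n₁, …, n_k ≥ 1 be integers with n* = n₀ + n₁ + ⋯ + n_k and m = n₁ + ⋯ + n_k, let σ₀, σ₁, …, σ_k > 0, and let h : [0, ∞) → [0, ∞] be measurable with ∫₀^∞ z^{n*/2 - 1} h(z) dz = Γ(n*/2)/π^{n*/2}. Let μ be the measure on ℝ^{n₀} × ℝ^{n₁} × ⋯ × ℝ^{n_k} with density (x₀, x₁, …, x_k) ↦ (∏_{i=0}^k σ_i^{-n_i}) · h(Σ_{i=0}^k σ_i^{-2} ‖x_i‖²) with respect to Lebesgue measure (a probability measure), and let T(x₀, x₁, …, x_k) = (‖x₀‖^{-1} x₁, …, ‖x₀‖^{-1} x_k), defined for x₀ ≠ 0. Then the pushforward measure T_*μ on ℝ^{n₁} × ⋯ × ℝ^{n_k} has density (t₁,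 …, t_k) ↦ Γ(n*/2) (∏_{i=1}^k β_i^{-n_i/2}) / (Γ(n₀/2) π^{m/2}) · (1 + Σ_{i=1}^k β_i^{-1} ‖t_i‖²)^{-n*/2} with respect to Lebesgue measure, where β_i = σ_i²/σ₀². -/
open MeasureTheory
open scoped ENNReal

open Set Metric

lemma my_lintegral_fun_norm_addHaar {E : Type*} [NormedAddCommGroup E] [NormedSpace ℝ E]
    [MeasurableSpace E] [BorelSpace E] [Nontrivial E] [FiniteDimensional ℝ E]
    (μ : Measure E) [μ.IsAddHaarMeasure] (f : ℝ → ℝ≥0∞) (hf : Measurable f) :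
    ∫⁻ x, f ‖x‖ ∂μ = (Module.finrank ℝ E) * μ (ball 0 1) *
      ∫⁻ y in Ioi (0:ℝ), ENNReal.ofReal (y ^ (Module.finrank ℝ E - 1)) * f y := by
  calc ∫⁻ x, f ‖x‖ ∂μ
      = ∫⁻ x : ({0}ᶜ : Set E), f ‖(x : E)‖ ∂(μ.comap (↑)) := by
        rw [lintegral_subtype_comap (measurableSet_singleton _).compl fun x => f ‖x‖,
          MeasureTheory.restrict_compl_singleton]
    _ = ∫⁻ x : ({0}ᶜ : Set E), (fun p : sphere (0:E) 1 × Ioi (0:ℝ) => f p.2)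
          (homeomorphUnitSphereProd E x) ∂(μ.comap (↑)) := by
        refine lintegral_congr fun x => ?_
        simp
    _ = ∫⁻ p : sphere (0:E) 1 × Ioi (0:ℝ), f p.2
          ∂(μ.toSphere.prod (Measure.volumeIoiPow (Module.finrank ℝ E - 1))) :=
        μ.measurePreserving_homeomorphUnitSphereProd.lintegral_comp
          (hf.comp (measurable_subtype_coe.comp measurable_snd))
    _ = μ.toSphere univ * ∫⁻ y : Ioi (0:ℝ), f y
          ∂(Measure.volumeIoiPow (Module.finrank ℝ E - 1)) := by
        rw [← lintegral_map (f := fun y : Ioi (0:ℝ) => f y) (by fun_prop) measurable_snd,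
          Measure.map_snd_prod, lintegral_smul_measure, smul_eq_mul]
    _ = _ := by
        rw [Measure.toSphere_apply_univ,
          ← lintegral_subtype_comap measurableSet_Ioi
            (fun z : ℝ => ENNReal.ofReal (z ^ (Module.finrank ℝ E - 1)) * f z),
          Measure.volumeIoiPow,
          lintegral_withDensity_eq_lintegral_mul _ (by fun_prop) (by fun_prop)]
        rfl

lemma my_lintegral_image_1d {s : Set ℝ} {f : ℝ → ℝ} {f' : ℝ → ℝ}
    (hs : MeasurableSet s) (hf' : ∀ x ∈ s, HasDerivWithinAt f (f' x) s x)
    (hf : Set.InjOn f s) (g : ℝ → ℝ≥0∞) :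
    ∫⁻ x in f '' s, g x = ∫⁻ x in s, ENNReal.ofReal |f' x| * g (f x) := by
  simpa only [ContinuousLinearMap.det_toSpanSingleton] using
    lintegral_image_eq_lintegral_abs_det_fderiv_mul volume hs
      (fun x hx => (hf' x hx).hasFDerivWithinAt) hf g

lemma my_sq_image : ∀ (a : ℝ), 0 < a → (fun r : ℝ => r ^ 2 * a) '' Set.Ioi 0 = Set.Ioi 0 := by
  intro a ha
  ext z
  constructor
  · rintro ⟨r, hr, rfl⟩
    exact mul_pos (pow_pos hr 2) ha
  · intro hz
    refine ⟨Real.sqrt (z / a), Real.sqrt_pos.2 (div_pos hz ha), ?_⟩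
    show Real.sqrt (z / a) ^ 2 * a = z
    rw [Real.sq_sqrt (div_pos hz ha).le, div_mul_cancel₀ _ ha.ne']

lemma my_key_radial (N M : ℕ) (hN : 1 ≤ N) (a : ℝ) (ha : 0 < a) (h : ℝ → ℝ≥0∞) :
    ∫⁻ r in Set.Ioi (0:ℝ),
        ENNReal.ofReal (r ^ (N - 1)) * (ENNReal.ofReal (r ^ M) * h (r ^ 2 * a)) =
      ENNReal.ofReal ((2:ℝ)⁻¹ * a ^ (-(((N + M : ℕ) : ℝ) / 2))) *
        ∫⁻ z in Set.Ioi (0:ℝ),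
          ENNReal.ofReal (z ^ (((N + M : ℕ) : ℝ) / 2 - 1)) * h z := by
  set s : ℝ := ((N + M : ℕ) : ℝ) / 2 with hs
  have hderiv : ∀ r ∈ Set.Ioi (0:ℝ),
      HasDerivWithinAt (fun r : ℝ => r ^ 2 * a) (2 * r * a) (Set.Ioi 0) r := by
    intro r _
    simpa [mul_comm] using ((hasDerivAt_pow 2 r).mul_const a).hasDerivWithinAt
  have hinj : Set.InjOn (fun r : ℝ => r ^ 2 * a) (Set.Ioi 0) := by
    intro x hx y hy hxy
    simp only [mul_eq_mul_right_iff, or_iff_left ha.ne'] at hxy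
    have hx' : (0:ℝ) < x := hx
    have hy' : (0:ℝ) < y := hy
    nlinarith [hxy]
  have himg : ∫⁻ z in Set.Ioi (0:ℝ), ENNReal.ofReal (z ^ (s - 1)) * h z
      = ∫⁻ r in Set.Ioi (0:ℝ), ENNReal.ofReal |2 * r * a| *
          (ENNReal.ofReal ((r ^ 2 * a) ^ (s - 1)) * h (r ^ 2 * a)) := by
    conv_lhs => rw [← my_sq_image a ha]
    exact my_lintegral_image_1d measurableSet_Ioi hderiv hinj
      (fun z => ENNReal.ofReal (z ^ (s - 1)) * h z)
  rw [himg, ← lintegral_const_mul' _ _ ENNReal.ofReal_ne_top]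
  refine setLIntegral_congr_fun measurableSet_Ioi ?_
  intro r hr
  beta_reduce
  have hr' : (0:ℝ) < r := hr
  have key : r ^ (N - 1) * r ^ M =
      2⁻¹ * a ^ (-s) * (|2 * r * a| * (r ^ 2 * a) ^ (s - 1)) := by
    have h1 : |2 * r * a| = 2 * r * a := abs_of_pos (by positivity)
    have h2 : (r ^ 2 : ℝ) ^ (s - 1) = r ^ (2 * (s - 1)) := by
      rw [← Real.rpow_natCast r 2, ← Real.rpow_mul hr'.le]
      norm_num
    have hNM : ((N - 1 : ℕ) : ℝ) + (M : ℕ) = 2 * s - 1 := by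
      rw [hs, Nat.cast_sub hN]
      push_cast
      ring
    rw [h1, Real.mul_rpow (by positivity) ha.le, h2, ← Real.rpow_natCast r (N - 1),
      ← Real.rpow_natCast r M, ← Real.rpow_add hr', hNM]
    have e1 : -s + (1 + (s - 1)) = 0 := by ring
    have e2 : (1 : ℝ) + 2 * (s - 1) = 2 * s - 1 := by ring
    symm
    calc 2⁻¹ * a ^ (-s) * (2 * r * a * (r ^ (2 * (s - 1)) * a ^ (s - 1)))
        = a ^ (-s) * (a ^ (1:ℝ) * a ^ (s - 1)) * (r ^ (1:ℝ) * r ^ (2 * (s - 1))) := by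
          rw [Real.rpow_one, Real.rpow_one]; ring
      _ = a ^ (-s + (1 + (s - 1))) * r ^ (1 + 2 * (s - 1)) := by
          rw [← Real.rpow_add ha, ← Real.rpow_add ha, ← Real.rpow_add hr']
      _ = r ^ (2 * s - 1) := by rw [e1, e2, Real.rpow_zero, one_mul]
  have hre : ENNReal.ofReal (2⁻¹ * a ^ (-s)) * (ENNReal.ofReal |2 * r * a| *
        (ENNReal.ofReal ((r ^ 2 * a) ^ (s - 1)) * h (r ^ 2 * a))) =
      ENNReal.ofReal (2⁻¹ * a ^ (-s) * (|2 * r * a| * (r ^ 2 * a) ^ (s - 1))) * h (r ^ 2 * a) := by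
    conv_rhs => rw [ENNReal.ofReal_mul (by positivity), ENNReal.ofReal_mul (abs_nonneg _)]
    ring
  rw [hre, ← mul_assoc, ← ENNReal.ofReal_mul (by positivity), key]


lemma my_const_eq (k n₀ : ℕ) (hn₀ : 1 ≤ n₀) (n : Fin k → ℕ)
    (σ₀ : ℝ) (σ : Fin k → ℝ) (hσ₀ : 0 < σ₀) (hσ : ∀ i, 0 < σ i)
    (m nstar : ℕ) (hm : m = ∑ i, n i) (hns : nstar = n₀ + m) (Q : ℝ) (hQ : 0 < Q) :
    (σ₀ ^ n₀ * ∏ i, σ i ^ (n i))⁻¹ *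
      ((n₀ : ℝ) * (Real.sqrt Real.pi ^ n₀ / Real.Gamma ((n₀ : ℝ) / 2 + 1)) *
        (2⁻¹ * ((σ₀ ^ 2)⁻¹ * Q) ^ (-((nstar : ℝ) / 2)) *
          (Real.Gamma ((nstar : ℝ) / 2) / Real.pi ^ ((nstar : ℝ) / 2)))) =
    Real.Gamma ((nstar : ℝ) / 2) * (∏ i, (σ i ^ 2 / σ₀ ^ 2) ^ (-((n i : ℝ) / 2))) /
      (Real.Gamma ((n₀ : ℝ) / 2) * Real.pi ^ ((m : ℝ) / 2)) * Q ^ (-((nstar : ℝ) / 2)) := by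
  have hπ : (0:ℝ) < Real.pi := Real.pi_pos
  have hS : (0:ℝ) < ∏ i, σ i ^ (n i) := Finset.prod_pos fun i _ => pow_pos (hσ i) _
  have hΓ0 : (0:ℝ) < Real.Gamma ((n₀ : ℝ) / 2) :=
    Real.Gamma_pos_of_pos (by positivity)
  have hn₀' : (0:ℝ) < (n₀ : ℝ) := by exact_mod_cast hn₀
  -- √π ^ n₀ = π ^ (n₀/2)
  have f1 : Real.sqrt Real.pi ^ n₀ = Real.pi ^ ((n₀ : ℝ) / 2) := by
    rw [Real.sqrt_eq_rpow, ← Real.rpow_natCast (Real.pi ^ ((1:ℝ)/2)) n₀,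
      ← Real.rpow_mul hπ.le, mul_comm, mul_one_div]
  -- Γ(n₀/2 + 1) = (n₀/2) Γ(n₀/2)
  have f2 : Real.Gamma ((n₀ : ℝ) / 2 + 1) = ((n₀ : ℝ) / 2) * Real.Gamma ((n₀ : ℝ) / 2) :=
    Real.Gamma_add_one (by positivity)
  -- π ^ (nstar/2) = π ^ (n₀/2) * π ^ (m/2)
  have f3 : Real.pi ^ ((nstar : ℝ) / 2) =
      Real.pi ^ ((n₀ : ℝ) / 2) * Real.pi ^ ((m : ℝ) / 2) := by
    rw [← Real.rpow_add hπ]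
    congr 1
    rw [hns]
    push_cast
    ring
  -- ((σ₀²)⁻¹ Q)^(-(ns/2)) = σ₀^ns * Q^(-(ns/2))
  have f4 : ((σ₀ ^ 2)⁻¹ * Q) ^ (-((nstar : ℝ) / 2)) =
      σ₀ ^ nstar * Q ^ (-((nstar : ℝ) / 2)) := by
    rw [Real.mul_rpow (by positivity) hQ.le]
    congr 1
    rw [Real.inv_rpow (by positivity), Real.rpow_neg (by positivity), inv_inv,
      ← Real.rpow_natCast σ₀ 2, ← Real.rpow_mul hσ₀.le,
      show (((2:ℕ):ℝ)) * ((nstar : ℝ) / 2) = ((nstar : ℕ) : ℝ) by push_cast; ring,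
      Real.rpow_natCast]
  -- ∏ (σᵢ²/σ₀²)^(-(nᵢ/2)) = σ₀^m / ∏ σᵢ^nᵢ
  have f5 : (∏ i, (σ i ^ 2 / σ₀ ^ 2) ^ (-((n i : ℝ) / 2))) =
      σ₀ ^ m / ∏ i, σ i ^ (n i) := by
    have step : ∀ i, (σ i ^ 2 / σ₀ ^ 2) ^ (-((n i : ℝ) / 2)) = σ₀ ^ (n i) / σ i ^ (n i) := by
      intro i
      have hb : (0:ℝ) < σ i / σ₀ := div_pos (hσ i) hσ₀
      calc (σ i ^ 2 / σ₀ ^ 2) ^ (-((n i : ℝ) / 2))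
          = ((σ i / σ₀) ^ (((2:ℕ):ℝ))) ^ (-((n i : ℝ) / 2)) := by
            rw [Real.rpow_natCast, div_pow]
        _ = (σ i / σ₀) ^ ((((2:ℕ):ℝ)) * (-((n i : ℝ) / 2))) := by
            rw [← Real.rpow_mul hb.le]
        _ = (σ i / σ₀) ^ (-((n i : ℕ) : ℝ)) := by
            congr 1
            push_cast
            ring
        _ = ((σ i / σ₀) ^ (n i : ℕ))⁻¹ := by
            rw [Real.rpow_neg hb.le, Real.rpow_natCast]
        _ = σ₀ ^ (n i) / σ i ^ (n i) := by
            rw [div_pow, inv_div]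
    rw [Finset.prod_congr rfl (fun i _ => step i), Finset.prod_div_distrib,
      Finset.prod_pow_eq_pow_sum, ← hm]
  rw [f1, f2, f4, f5, hns, pow_add]
  rw [hns] at f3
  rw [f3]
  have hΓpos : True := trivial
  field_simp

/-- Derivation of the multivector variate t distribution: if `μ` is the probability
measure on `ℝ^{n₀} × ℝ^{n₁} × ⋯ × ℝ^{n_k}` with the elliptical density
`(∏ σᵢ^{-nᵢ}) h(Σ σᵢ^{-2}‖xᵢ‖²)` and `T(x₀,…,x_k) = (‖x₀‖⁻¹ x₁, …, ‖x₀‖⁻¹ x_k)`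
(defined for `x₀ ≠ 0`), then the pushforward `T⋆μ` has the multivector variate t
density with parameters `βᵢ = σᵢ²/σ₀²`. -/
theorem stmt18 (k : ℕ) (hk : 1 ≤ k) (n₀ : ℕ) (hn₀ : 1 ≤ n₀)
    (n : Fin k → ℕ) (hn : ∀ i, 1 ≤ n i)
    (σ₀ : ℝ) (σ : Fin k → ℝ) (hσ₀ : 0 < σ₀) (hσ : ∀ i, 0 < σ i)
    (m nstar : ℕ) (hm : m = ∑ i, n i) (hns : nstar = n₀ + m)
    (h : ℝ → ℝ≥0∞) (hh : Measurable h)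
    (hnorm : ∫⁻ z in Set.Ioi (0 : ℝ),
        ENNReal.ofReal (z ^ ((nstar : ℝ) / 2 - 1)) * h z =
      ENNReal.ofReal (Real.Gamma ((nstar : ℝ) / 2) / Real.pi ^ ((nstar : ℝ) / 2)))
    (μ : Measure (EuclideanSpace ℝ (Fin n₀) × Π i, EuclideanSpace ℝ (Fin (n i))))
    (hμ : μ = volume.withDensity (fun p =>
      ENNReal.ofReal ((σ₀ ^ n₀ * ∏ i, σ i ^ (n i))⁻¹) *
        h ((σ₀ ^ 2)⁻¹ * ‖p.1‖ ^ 2 + ∑ i, ((σ i) ^ 2)⁻¹ * ‖p.2 i‖ ^ 2)))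
    (T : (EuclideanSpace ℝ (Fin n₀) × Π i, EuclideanSpace ℝ (Fin (n i))) →
      (Π i, EuclideanSpace ℝ (Fin (n i))))
    (hT : ∀ p, p.1 ≠ 0 → T p = fun i => ‖p.1‖⁻¹ • p.2 i) :
    μ.map T = volume.withDensity (fun t =>
      ENNReal.ofReal (Real.Gamma ((nstar : ℝ) / 2) *
          (∏ i, (σ i ^ 2 / σ₀ ^ 2) ^ (-((n i : ℝ) / 2))) /
          (Real.Gamma ((n₀ : ℝ) / 2) * Real.pi ^ ((m : ℝ) / 2)) *
        (1 + ∑ i, (σ i ^ 2 / σ₀ ^ 2)⁻¹ * ‖t i‖ ^ 2) ^ (-((nstar : ℝ) / 2)))) := by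
  haveI : Nonempty (Fin n₀) := ⟨⟨0, hn₀⟩⟩
  haveI : Nontrivial (EuclideanSpace ℝ (Fin n₀)) := inferInstance
  -- abbreviations
  set c : ℝ := (σ₀ ^ n₀ * ∏ i, σ i ^ (n i))⁻¹ with hcdef
  have hprodpos : (0:ℝ) < σ₀ ^ n₀ * ∏ i, σ i ^ (n i) :=
    mul_pos (pow_pos hσ₀ _) (Finset.prod_pos fun i _ => pow_pos (hσ i) _)
  have hc0 : 0 ≤ c := by
    rw [hcdef]
    exact inv_nonneg.2 hprodpos.le
  set a : (Π i, EuclideanSpace ℝ (Fin (n i))) → ℝ :=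
    fun t => (σ₀ ^ 2)⁻¹ + ∑ i, ((σ i) ^ 2)⁻¹ * ‖t i‖ ^ 2 with hadef
  have hapos : ∀ t, 0 < a t := by
    intro t
    rw [hadef]
    have : 0 ≤ ∑ i, ((σ i) ^ 2)⁻¹ * ‖t i‖ ^ 2 :=
      Finset.sum_nonneg fun i _ => by positivity
    have h0 : (0:ℝ) < (σ₀ ^ 2)⁻¹ := by positivity
    linarith
  have hameas : Measurable a := by
    rw [hadef]
    fun_prop
  have hQpos : ∀ t : Π i, EuclideanSpace ℝ (Fin (n i)),
      0 < 1 + ∑ i, (σ i ^ 2 / σ₀ ^ 2)⁻¹ * ‖t i‖ ^ 2 := by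
    intro t
    have : 0 ≤ ∑ i, (σ i ^ 2 / σ₀ ^ 2)⁻¹ * ‖t i‖ ^ 2 :=
      Finset.sum_nonneg fun i _ => by positivity
    linarith
  have haQ : ∀ t : Π i, EuclideanSpace ℝ (Fin (n i)),
      a t = (σ₀ ^ 2)⁻¹ * (1 + ∑ i, (σ i ^ 2 / σ₀ ^ 2)⁻¹ * ‖t i‖ ^ 2) := by
    intro t
    rw [hadef]
    simp only [mul_add, mul_one, Finset.mul_sum]
    congr 1
    refine Finset.sum_congr rfl fun i _ => ?_
    have h2 : σ₀ ^ 2 ≠ 0 := by positivity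
    rw [inv_div, div_eq_mul_inv, ← mul_assoc, ← mul_assoc, inv_mul_cancel₀ h2, one_mul]
  set F : (EuclideanSpace ℝ (Fin n₀) × Π i, EuclideanSpace ℝ (Fin (n i))) → ℝ≥0∞ := fun p =>
    ENNReal.ofReal c * h ((σ₀ ^ 2)⁻¹ * ‖p.1‖ ^ 2 + ∑ i, ((σ i) ^ 2)⁻¹ * ‖p.2 i‖ ^ 2)
    with hFdef
  have hFmeas : Measurable F := by
    rw [hFdef]
    fun_prop
  set T' : (EuclideanSpace ℝ (Fin n₀) × Π i, EuclideanSpace ℝ (Fin (n i))) →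
      (Π i, EuclideanSpace ℝ (Fin (n i))) := fun p => fun i => ‖p.1‖⁻¹ • p.2 i with hT'def
  have hT'meas : Measurable T' := by
    rw [hT'def]
    fun_prop
  subst hμ
  -- replace T by T'
  have hTae : T =ᵐ[volume.withDensity F] T' := by
    have hnullvol : (volume :
        Measure (EuclideanSpace ℝ (Fin n₀) × Π i, EuclideanSpace ℝ (Fin (n i))))
        {p | p.1 = 0} = 0 := by
      have hset : {p : EuclideanSpace ℝ (Fin n₀) × Π i, EuclideanSpace ℝ (Fin (n i)) |
          p.1 = 0} = ({(0 : EuclideanSpace ℝ (Fin n₀))} ×ˢ (Set.univ :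
            Set (Π i, EuclideanSpace ℝ (Fin (n i))))) := by
        ext p
        simp [Set.mem_prod, Prod.ext_iff, eq_comm]
      rw [Measure.volume_eq_prod, hset, Measure.prod_prod, measure_singleton, zero_mul]
    have hnull : (volume.withDensity F) {p | p.1 = 0} = 0 :=
      withDensity_absolutelyContinuous volume F hnullvol
    have hae : ∀ᵐ p ∂(volume.withDensity F), p.1 ≠ (0 : EuclideanSpace ℝ (Fin n₀)) := by
      rw [ae_iff]
      convert hnull using 2
      simp
    filter_upwards [hae] with p hp
    rw [hT p hp]
  rw [Measure.map_congr hTae]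
  ext s hs
  rw [Measure.map_apply hT'meas hs, withDensity_apply _ (hT'meas hs), withDensity_apply _ hs,
    ← lintegral_indicator (hT'meas hs), ← lintegral_indicator hs]
  have hind : Measurable ((T' ⁻¹' s).indicator F) := hFmeas.indicator (hT'meas hs)
  rw [Measure.volume_eq_prod, lintegral_prod _ hind.aemeasurable]
  have hfinP : Module.finrank ℝ (Π i, EuclideanSpace ℝ (Fin (n i))) = m := by
    rw [Module.finrank_pi_fintype, hm]
    simp [finrank_euclideanSpace]
  -- Step 1: inner integral for x₀ ≠ 0
  have key1 : ∀ x₀ : EuclideanSpace ℝ (Fin n₀), x₀ ≠ 0 →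
      (∫⁻ x : Π i, EuclideanSpace ℝ (Fin (n i)), (T' ⁻¹' s).indicator F (x₀, x)) =
      ENNReal.ofReal (‖x₀‖ ^ m) * ∫⁻ t : Π i, EuclideanSpace ℝ (Fin (n i)),
        s.indicator (fun _ => (1:ℝ≥0∞)) t * (ENNReal.ofReal c * h (‖x₀‖ ^ 2 * a t)) := by
    intro x₀ hx₀
    have hn0 : ‖x₀‖ ≠ 0 := norm_ne_zero_iff.2 hx₀
    have hGmeas : Measurable (fun t : Π i, EuclideanSpace ℝ (Fin (n i)) =>
        s.indicator (fun _ => (1:ℝ≥0∞)) t * (ENNReal.ofReal c * h (‖x₀‖ ^ 2 * a t))) :=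
      (measurable_const.indicator hs).mul
        (measurable_const.mul (hh.comp (measurable_const.mul hameas)))
    have hpt : ∀ x : Π i, EuclideanSpace ℝ (Fin (n i)),
        (T' ⁻¹' s).indicator F (x₀, x) =
        (fun t => s.indicator (fun _ => (1:ℝ≥0∞)) t *
          (ENNReal.ofReal c * h (‖x₀‖ ^ 2 * a t))) (‖x₀‖⁻¹ • x) := by
      intro x
      have harg : ‖x₀‖ ^ 2 * a (‖x₀‖⁻¹ • x) =
          (σ₀ ^ 2)⁻¹ * ‖x₀‖ ^ 2 + ∑ i, ((σ i) ^ 2)⁻¹ * ‖x i‖ ^ 2 := by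
        rw [hadef]
        simp only [Pi.smul_apply, norm_smul, norm_inv, norm_norm]
        rw [mul_add, Finset.mul_sum]
        congr 1
        · ring
        · refine Finset.sum_congr rfl fun i _ => ?_
          have e1 : (‖x₀‖⁻¹ * ‖x i‖) ^ 2 = (‖x₀‖ ^ 2)⁻¹ * ‖x i‖ ^ 2 := by
            rw [mul_pow, inv_pow]
          calc ‖x₀‖ ^ 2 * ((σ i ^ 2)⁻¹ * (‖x₀‖⁻¹ * ‖x i‖) ^ 2)
              = (‖x₀‖ ^ 2 * (‖x₀‖ ^ 2)⁻¹) * ((σ i ^ 2)⁻¹ * ‖x i‖ ^ 2) := by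
                rw [e1]; ring
            _ = (σ i ^ 2)⁻¹ * ‖x i‖ ^ 2 := by
                rw [mul_inv_cancel₀ (pow_ne_zero 2 hn0), one_mul]
      have hTval : T' (x₀, x) = ‖x₀‖⁻¹ • x := rfl
      by_cases hxs : (‖x₀‖⁻¹ • x) ∈ s
      · rw [Set.indicator_of_mem
            (show (x₀, x) ∈ T' ⁻¹' s from by rw [Set.mem_preimage, hTval]; exact hxs)]
        simp only [Set.indicator_of_mem hxs, one_mul, harg, hFdef]
      · rw [Set.indicator_of_notMem
            (show (x₀, x) ∉ T' ⁻¹' s from by rw [Set.mem_preimage, hTval]; exact hxs)]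
        simp only [Set.indicator_of_notMem hxs, zero_mul]
    calc (∫⁻ x : Π i, EuclideanSpace ℝ (Fin (n i)), (T' ⁻¹' s).indicator F (x₀, x))
        = ∫⁻ x : Π i, EuclideanSpace ℝ (Fin (n i)),
            (fun t => s.indicator (fun _ => (1:ℝ≥0∞)) t *
              (ENNReal.ofReal c * h (‖x₀‖ ^ 2 * a t))) (‖x₀‖⁻¹ • x) :=
          lintegral_congr hpt
      _ = ∫⁻ t : Π i, EuclideanSpace ℝ (Fin (n i)),
            s.indicator (fun _ => (1:ℝ≥0∞)) t * (ENNReal.ofReal c * h (‖x₀‖ ^ 2 * a t))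
            ∂(Measure.map (fun x : Π i, EuclideanSpace ℝ (Fin (n i)) => ‖x₀‖⁻¹ • x) volume) :=
          (lintegral_map hGmeas (measurable_const_smul _)).symm
      _ = ENNReal.ofReal (‖x₀‖ ^ m) * ∫⁻ t : Π i, EuclideanSpace ℝ (Fin (n i)),
            s.indicator (fun _ => (1:ℝ≥0∞)) t * (ENNReal.ofReal c * h (‖x₀‖ ^ 2 * a t)) := by
          rw [Measure.map_addHaar_smul (μ := volume) (inv_ne_zero hn0),
            lintegral_smul_measure, hfinP]
          congr 2
          rw [inv_pow, inv_inv, abs_of_nonneg (by positivity)]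
  have hae0 : ∀ᵐ x₀ : EuclideanSpace ℝ (Fin n₀) ∂volume, x₀ ≠ 0 := by
    have h0 : (volume : Measure (EuclideanSpace ℝ (Fin n₀))) {0} = 0 := measure_singleton _
    rw [ae_iff]
    convert h0 using 2
    ext y
    simp
  have hprodmeas : Measurable (fun z : (EuclideanSpace ℝ (Fin n₀)) ×
      (Π i, EuclideanSpace ℝ (Fin (n i))) =>
      ENNReal.ofReal (‖z.1‖ ^ m) * (s.indicator (fun _ => (1:ℝ≥0∞)) z.2 *
        (ENNReal.ofReal c * h (‖z.1‖ ^ 2 * a z.2)))) := by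
    refine (((measurable_norm.comp measurable_fst).pow_const m).ennreal_ofReal).mul ?_
    refine ((measurable_const.indicator hs).comp measurable_snd).mul ?_
    exact measurable_const.mul (hh.comp
      (((measurable_norm.comp measurable_fst).pow_const 2).mul (hameas.comp measurable_snd)))
  calc ∫⁻ x₀, ∫⁻ x, (T' ⁻¹' s).indicator F (x₀, x) ∂volume ∂volume
      = ∫⁻ x₀ : EuclideanSpace ℝ (Fin n₀), ∫⁻ t : Π i, EuclideanSpace ℝ (Fin (n i)),
          ENNReal.ofReal (‖x₀‖ ^ m) * (s.indicator (fun _ => (1:ℝ≥0∞)) t *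
            (ENNReal.ofReal c * h (‖x₀‖ ^ 2 * a t))) := by
        refine lintegral_congr_ae ?_
        filter_upwards [hae0] with x₀ hx₀
        rw [key1 x₀ hx₀, ← lintegral_const_mul' _ _ ENNReal.ofReal_ne_top]
    _ = ∫⁻ t : Π i, EuclideanSpace ℝ (Fin (n i)), ∫⁻ x₀ : EuclideanSpace ℝ (Fin n₀),
          ENNReal.ofReal (‖x₀‖ ^ m) * (s.indicator (fun _ => (1:ℝ≥0∞)) t *
            (ENNReal.ofReal c * h (‖x₀‖ ^ 2 * a t))) :=
        lintegral_lintegral_swap hprodmeas.aemeasurable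
    _ = ∫⁻ t : Π i, EuclideanSpace ℝ (Fin (n i)), s.indicator (fun t =>
          ENNReal.ofReal (Real.Gamma ((nstar : ℝ) / 2) *
              (∏ i, (σ i ^ 2 / σ₀ ^ 2) ^ (-((n i : ℝ) / 2))) /
              (Real.Gamma ((n₀ : ℝ) / 2) * Real.pi ^ ((m : ℝ) / 2)) *
            (1 + ∑ i, (σ i ^ 2 / σ₀ ^ 2)⁻¹ * ‖t i‖ ^ 2) ^ (-((nstar : ℝ) / 2)))) t := by
        refine lintegral_congr fun t => ?_
        have hne : s.indicator (fun _ => (1:ℝ≥0∞)) t * ENNReal.ofReal c ≠ ⊤ := by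
          refine ENNReal.mul_ne_top ?_ ENNReal.ofReal_ne_top
          by_cases hts : t ∈ s <;> simp [hts]
        have hre : ∀ x₀ : EuclideanSpace ℝ (Fin n₀),
            ENNReal.ofReal (‖x₀‖ ^ m) * (s.indicator (fun _ => (1:ℝ≥0∞)) t *
              (ENNReal.ofReal c * h (‖x₀‖ ^ 2 * a t))) =
            (s.indicator (fun _ => (1:ℝ≥0∞)) t * ENNReal.ofReal c) *
              (ENNReal.ofReal (‖x₀‖ ^ m) * h (‖x₀‖ ^ 2 * a t)) := fun x₀ => by ring
        rw [lintegral_congr hre, lintegral_const_mul' _ _ hne]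
        have hpolar := my_lintegral_fun_norm_addHaar
          (volume : Measure (EuclideanSpace ℝ (Fin n₀)))
          (fun r => ENNReal.ofReal (r ^ m) * h (r ^ 2 * a t)) (by fun_prop)
        rw [finrank_euclideanSpace_fin] at hpolar
        rw [show (∫⁻ x₀ : EuclideanSpace ℝ (Fin n₀),
            ENNReal.ofReal (‖x₀‖ ^ m) * h (‖x₀‖ ^ 2 * a t)) =
            ↑n₀ * volume (Metric.ball (0 : EuclideanSpace ℝ (Fin n₀)) 1) *
            ∫⁻ y in Set.Ioi (0:ℝ), ENNReal.ofReal (y ^ (n₀ - 1)) *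
              (ENNReal.ofReal (y ^ m) * h (y ^ 2 * a t)) from hpolar]
        rw [my_key_radial n₀ m hn₀ (a t) (hapos t) h, ← hns, hnorm,
          EuclideanSpace.volume_ball]
        simp only [Fintype.card_fin, ENNReal.ofReal_one, one_pow, one_mul]
        by_cases hts : t ∈ s
        · simp only [Set.indicator_of_mem hts, one_mul]
          have hA : (0:ℝ) ≤ Real.sqrt Real.pi ^ n₀ / Real.Gamma ((n₀ : ℝ) / 2 + 1) :=
            div_nonneg (pow_nonneg (Real.sqrt_nonneg _) _)
              (Real.Gamma_pos_of_pos (by positivity)).le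
          rw [haQ t, ← ENNReal.ofReal_natCast n₀,
            ← ENNReal.ofReal_mul (by positivity : (0:ℝ) ≤ ((n₀:ℕ):ℝ)),
            ← ENNReal.ofReal_mul (by positivity :
              (0:ℝ) ≤ 2⁻¹ * ((σ₀ ^ 2)⁻¹ * (1 + ∑ i, (σ i ^ 2 / σ₀ ^ 2)⁻¹ * ‖t i‖ ^ 2)) ^
                (-((nstar : ℝ) / 2))),
            ← ENNReal.ofReal_mul (by positivity), ← ENNReal.ofReal_mul hc0]
          exact congrArg ENNReal.ofReal
            (my_const_eq k n₀ hn₀ n σ₀ σ hσ₀ hσ m nstar hm hns _ (hQpos t))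
        · simp [Set.indicator_of_notMem hts]
end
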